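/- arXiv:2509.07972 — 6 statements merged into one kernel-verified Lean document; each statement's English description precedes it below -/
import Mathlib

section
/- Let f : ℝ^d → ℝ be convex and (ρ, K₀, K_ρ)-smooth with K₀, K_ρ > 0 and f* = inf f > −∞, attained at a minimizer w* ∈ ℝ^d. Let w₀ ∈ ℝ^d, D₀ = ‖w₀ − w*‖ and Δ₀ = f(w₀) − f* < ∞. Consider gradient descent with the constant learning rate η = (1/(8√2 + 8)) · min{1/K₀, 1/(3^ρ K_ρ Δ₀^ρ)}, i.e. w_{t+1} = w_t − η ∇f(w_t). Then for every T ≥ 1: Δ_{t+1} ≤ Δ_t for all t < T, where Δ_t = f(w_t) − f*, and f(w_{T−1}) − f(w*) ≤ D₀² / (2 η T) ≤ (4√2 + 4) · (K₀ D₀² + 3^ρ K_ρ Δ₀^ρ D₀²) / T. -/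
open Real InnerProductSpace Set Filter Topology

noncomputable section
set_option linter.unusedSectionVars false

local notation "⟪" x ", " y "⟫" => @inner ℝ _ _ x y

variable {E : Type*} [NormedAddCommGroup E] [InnerProductSpace ℝ E] [CompleteSpace E]

lemma grad_inner' (f : E → ℝ) (y v : E) : ⟪gradient f y, v⟫ = fderiv ℝ f y v :=
  InnerProductSpace.toDual_symm_apply

lemma line_hasDerivAt' (x v : E) (s : ℝ) : HasDerivAt (fun s : ℝ => x + s • v) v s := by
  simpa using ((hasDerivAt_id s).smul_const v).const_add x

lemma comp_line_hasDerivAt' (f : E → ℝ) (hfd : Differentiable ℝ f) (x v : E) (s : ℝ) :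
    HasDerivAt (fun s : ℝ => f (x + s • v)) ⟪gradient f (x + s • v), v⟫ s := by
  have h := ((hfd (x + s • v)).hasFDerivAt).comp_hasDerivAt s (line_hasDerivAt' x v s)
  rw [grad_inner']
  exact h

lemma grad_differentiable' (f : E → ℝ) (hf : ContDiff ℝ 2 f) :
    Differentiable ℝ (gradient f) := by
  have h1 : ContDiff ℝ 1 (fderiv ℝ f) := hf.fderiv_right (by norm_num)
  have h2 : Differentiable ℝ (fderiv ℝ f) := h1.differentiable one_ne_zero
  exact fun y => ((InnerProductSpace.toDual ℝ E).symm.differentiableAt).comp y (h2 y)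

lemma convex_first_order' (f : E → ℝ) (hfd : Differentiable ℝ f)
    (hconv : ConvexOn ℝ Set.univ f) (x y : E) :
    f x + ⟪gradient f x, y - x⟫ ≤ f y := by
  set v := y - x with hv
  set g : ℝ → ℝ := fun s => f (x + s • v) with hgdef
  have hg : ∀ s : ℝ, HasDerivAt g ⟪gradient f (x + s • v), v⟫ s :=
    comp_line_hasDerivAt' f hfd x v
  have h0 : HasDerivAt g ⟪gradient f x, v⟫ 0 := by simpa using hg 0
  have hslope : Tendsto (slope g 0) (𝓝[>] 0) (𝓝 ⟪gradient f x, v⟫) :=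
    (hasDerivAt_iff_tendsto_slope.1 h0).mono_left
      (nhdsWithin_mono 0 (fun u hu => Set.mem_compl_singleton_iff.2 (ne_of_gt hu)))
  have hub : ∀ᶠ u in 𝓝[>] (0:ℝ), slope g 0 u ≤ f y - f x := by
    filter_upwards [self_mem_nhdsWithin,
      (eventually_le_nhds (zero_lt_one (α := ℝ))).filter_mono nhdsWithin_le_nhds] with u hu h1
    have hu0 : (0:ℝ) < u := hu
    have hcomb := hconv.2 (Set.mem_univ x) (Set.mem_univ y)
      (by linarith : (0:ℝ) ≤ 1 - u) hu0.le (by ring)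
    have hxy : x + u • v = (1 - u) • x + u • y := by
      rw [hv]; module
    have hgu : g u ≤ (1 - u) * f x + u * f y := by
      rw [hgdef]; dsimp only; rw [hxy]; exact hcomb
    have hg0' : g 0 = f x := by simp [hgdef]
    rw [slope_def_field, sub_zero, div_le_iff₀ hu0, hg0']
    nlinarith
  have := le_of_tendsto hslope hub
  linarith

lemma descent_core' (f : E → ℝ) (hf : ContDiff ℝ 2 f) (hconv : ConvexOn ℝ Set.univ f)
    (L : ℝ) (hL : 0 < L) (x : E)
    (hLip : ∀ y, f y ≤ f x → ‖fderiv ℝ (gradient f) y‖ ≤ L)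
    (η' : ℝ) (hη0 : 0 ≤ η') (hηL : η' * L ≤ 1) :
    f (x - η' • gradient f x) ≤ f x - η' / 2 * ‖gradient f x‖ ^ 2 := by
  have hfd : Differentiable ℝ f := hf.differentiable (by norm_num)
  set G := gradient f x with hG
  rcases hη0.eq_or_lt with h | hη'pos
  · simp [← h]
  by_cases hGz : G = 0
  · simp [hGz]
  have hGnorm : 0 < ‖G‖ := norm_pos_iff.2 hGz
  set v : E := -(η' • G) with hv
  have hvnorm : ‖v‖ = η' * ‖G‖ := by
    rw [hv, norm_neg, norm_smul, Real.norm_eq_abs, abs_of_nonneg hη0]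
  have hGv : ⟪G, v⟫ = -(η' * ‖G‖ ^ 2) := by
    rw [hv, inner_neg_right, real_inner_smul_right, real_inner_self_eq_norm_sq]
  set g : ℝ → ℝ := fun s => f (x + s • v) with hgdef
  have hg : ∀ s : ℝ, HasDerivAt g ⟪gradient f (x + s • v), v⟫ s :=
    comp_line_hasDerivAt' f hfd x v
  have hgcont : Continuous g :=
    hfd.continuous.comp (continuous_const.add (continuous_id.smul continuous_const))
  have hg0 : g 0 = f x := by simp [hgdef]
  have hgrad : Differentiable ℝ (gradient f) := grad_differentiable' f hf
  set a : ℝ := η' / 2 * ‖G‖ ^ 2 with ha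
  have ha0 : 0 < a := by positivity
  set ψ : ℝ → ℝ := fun s => g s + s * a with hψ
  have hψcont : Continuous ψ := hgcont.add (continuous_id.mul continuous_const)
  set S : Set ℝ := Icc (0:ℝ) 1 ∩ {s | ψ s ≤ g 0} with hS
  have h0S : (0:ℝ) ∈ S := ⟨⟨le_refl 0, zero_le_one⟩, by simp [hψ]⟩
  have hbdd : BddAbove S := BddAbove.mono inter_subset_left bddAbove_Icc
  have hgc : ConvexOn ℝ univ g := by
    have h := hconv.comp_affineMap (AffineMap.lineMap x (x + v) : ℝ →ᵃ[ℝ] E)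
    rw [Set.preimage_univ] at h
    have hfun : g = f ∘ (AffineMap.lineMap x (x + v) : ℝ →ᵃ[ℝ] E) := by
      funext s
      show f (x + s • v) = f (AffineMap.lineMap x (x + v) s)
      rw [AffineMap.lineMap_apply]
      congr 1
      simp [vsub_eq_sub, vadd_eq_add, add_sub_cancel_left, add_comm]
    rw [hfun]
    exact h
  have hlin : ConvexOn ℝ univ (fun s : ℝ => s * a) :=
    ⟨convex_univ, fun p _ q _ b c _ _ _ => by
      simp only [smul_eq_mul]; exact le_of_eq (by ring)⟩
  have hψc : ConvexOn ℝ univ ψ := hgc.add hlin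
  have hconvS : Convex ℝ S := by
    refine (convex_Icc 0 1).inter ?_
    have h := hψc.convex_le (g 0)
    simpa [Set.sep_univ] using h
  have hclosed : IsClosed S := isClosed_Icc.inter (isClosed_le hψcont continuous_const)
  set m := sSup S with hm
  have hmS : m ∈ S := hclosed.csSup_mem ⟨0, h0S⟩ hbdd
  have hm0 : 0 ≤ m := le_csSup hbdd h0S
  have hm1 : m ≤ 1 := hmS.1.2
  have hsub : Icc (0:ℝ) m ⊆ S := hconvS.ordConnected.out h0S hmS
  have hsubl : ∀ u ∈ Icc (0:ℝ) m, f (x + u • v) ≤ f x := by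
    intro u hu
    have h := (hsub hu).2
    simp only [Set.mem_setOf_eq, hψ] at h
    have h2 : (0:ℝ) ≤ u * a := mul_nonneg hu.1 ha0.le
    have : g u ≤ g 0 := by linarith
    rw [hg0] at this
    exact this
  have hDconv : Convex ℝ {y : E | f y ≤ f x} := by
    have h := hconv.convex_le (f x)
    simpa [Set.sep_univ] using h
  have hlipG : ∀ u ∈ Icc (0:ℝ) m, ‖gradient f (x + u • v) - G‖ ≤ L * (u * ‖v‖) := by
    intro u hu
    have h1 : x ∈ {y : E | f y ≤ f x} := le_refl (f x)
    have h2 : x + u • v ∈ {y : E | f y ≤ f x} := hsubl u hu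
    have h := hDconv.norm_image_sub_le_of_norm_fderiv_le
      (fun y _ => hgrad.differentiableAt) (fun y hy => hLip y hy) h1 h2
    rw [hG]
    calc ‖gradient f (x + u • v) - gradient f x‖ ≤ L * ‖x + u • v - x‖ := h
      _ = L * (u * ‖v‖) := by
          rw [add_sub_cancel_left, norm_smul, Real.norm_eq_abs, abs_of_nonneg hu.1]
  -- Taylor bound at m
  set φ : ℝ → ℝ := fun u => g u - (u * ⟪G, v⟫ + L / 2 * u ^ 2 * ‖v‖ ^ 2) with hφ
  have hφd : ∀ u : ℝ, HasDerivAt φ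
      (⟪gradient f (x + u • v), v⟫ - (⟪G, v⟫ + L * u * ‖v‖ ^ 2)) u := by
    intro u
    have h1 : HasDerivAt (fun u : ℝ => u * ⟪G, v⟫) ⟪G, v⟫ u := by
      simpa using (hasDerivAt_id u).mul_const ⟪G, v⟫
    have h2 : HasDerivAt (fun u : ℝ => L / 2 * u ^ 2 * ‖v‖ ^ 2)
        (L / 2 * (2 * u) * ‖v‖ ^ 2) u := by
      have h3 := ((hasDerivAt_pow 2 u).const_mul (L / 2)).mul_const (‖v‖ ^ 2)
      simpa using h3
    have h4 := (hg u).sub (h1.add h2)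
    exact h4.congr_deriv (by ring)
  have hanti : AntitoneOn φ (Icc 0 m) := by
    apply antitoneOn_of_deriv_nonpos (convex_Icc 0 m)
    · exact (hgcont.sub ((continuous_id.mul continuous_const).add
        ((continuous_const.mul (continuous_pow 2)).mul continuous_const))).continuousOn
    · exact fun u _ => ((hφd u).differentiableAt).differentiableWithinAt
    · intro u hu
      rw [interior_Icc] at hu
      rw [(hφd u).deriv]
      have hmem : u ∈ Icc (0:ℝ) m := ⟨hu.1.le, hu.2.le⟩
      have h1 : ⟪gradient f (x + u • v) - G, v⟫ ≤ ‖gradient f (x + u • v) - G‖ * ‖v‖ :=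
        real_inner_le_norm _ _
      have h2 := mul_le_mul_of_nonneg_right (hlipG u hmem) (norm_nonneg v)
      have h3 : ⟪gradient f (x + u • v), v⟫ - ⟪G, v⟫ = ⟪gradient f (x + u • v) - G, v⟫ :=
        (inner_sub_left _ _ _).symm
      have h4 : L * (u * ‖v‖) * ‖v‖ = L * u * ‖v‖ ^ 2 := by ring
      linarith
  have htaylor : g m ≤ g 0 + m * ⟪G, v⟫ + L / 2 * m ^ 2 * ‖v‖ ^ 2 := by
    have h := hanti (left_mem_Icc.2 hm0) (right_mem_Icc.2 hm0) hm0
    have h0' : φ 0 = g 0 := by simp [hφ]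
    simp only [hφ] at h h0' ⊢
    linarith
  -- m > 0
  have hd0 : ⟪G, v⟫ < 0 := by
    rw [hGv]
    have : 0 < η' * ‖G‖ ^ 2 := by positivity
    linarith
  have hmpos : 0 < m := by
    have h0' : HasDerivAt g ⟪G, v⟫ 0 := by simpa [← hG] using hg 0
    have hs : Tendsto (slope g 0) (𝓝[>] 0) (𝓝 ⟪G, v⟫) :=
      (hasDerivAt_iff_tendsto_slope.1 h0').mono_left
        (nhdsWithin_mono 0 (fun u hu => Set.mem_compl_singleton_iff.2 (ne_of_gt hu)))
    have hev : ∀ᶠ u in 𝓝[>] (0:ℝ), slope g 0 u < ⟪G, v⟫ / 2 :=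
      hs.eventually_lt_const (by linarith)
    have hev2 : ∀ᶠ u in 𝓝[>] (0:ℝ), u < 1 :=
      (eventually_lt_nhds zero_lt_one).filter_mono nhdsWithin_le_nhds
    obtain ⟨u, hu1, hu2, hu3⟩ := (hev.and (hev2.and self_mem_nhdsWithin)).exists
    have hupos : (0:ℝ) < u := hu3
    rw [slope_def_field, sub_zero, div_lt_iff₀ hupos] at hu1
    have huS : u ∈ S := by
      refine ⟨⟨hupos.le, hu2.le⟩, ?_⟩
      show ψ u ≤ g 0
      have heq : ⟪G, v⟫ / 2 * u = -(u * a) := by rw [hGv, ha]; ring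
      simp only [hψ]
      linarith
    exact lt_of_lt_of_le hupos (le_csSup hbdd huS)
  have hmeq : m = 1 := by
    by_contra hne
    have hmlt : m < 1 := lt_of_le_of_ne hm1 hne
    have hq : L * m * η' < 1 := by
      have : L * m * η' = m * (η' * L) := by ring
      rw [this]
      calc m * (η' * L) ≤ m * 1 := by
            apply mul_le_mul_of_nonneg_left hηL hm0
        _ = m := mul_one m
        _ < 1 := hmlt
    have hP : 0 < m * η' * ‖G‖ ^ 2 := by positivity
    have hstrict : ψ m < g 0 := by
      have hX := mul_pos (sub_pos.2 hq) hP
      have hv2 : ‖v‖ ^ 2 = η' ^ 2 * ‖G‖ ^ 2 := by rw [hvnorm]; ring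
      have htaylor' := htaylor
      rw [hGv, hv2] at htaylor'
      simp only [hψ]
      nlinarith [htaylor', hX]
    have hev : ∀ᶠ u in 𝓝[>] m, ψ u < g 0 :=
      ((hψcont.tendsto m).eventually_lt_const hstrict).filter_mono nhdsWithin_le_nhds
    have hev2 : ∀ᶠ u in 𝓝[>] m, u < 1 :=
      (eventually_lt_nhds hmlt).filter_mono nhdsWithin_le_nhds
    obtain ⟨u, hu1, hu2, hu3⟩ := (hev.and (hev2.and self_mem_nhdsWithin)).exists
    have : u ≤ m := le_csSup hbdd ⟨⟨le_trans hm0 (le_of_lt hu3), hu2.le⟩, hu1.le⟩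
    exact absurd hu3 (not_lt.2 this)
  have h1S : (1:ℝ) ∈ S := hmeq ▸ hmS
  have hfinal : g 1 + a ≤ g 0 := by
    have h := h1S.2
    simpa [hψ] using h
  have hxv : x + (1:ℝ) • v = x - η' • G := by
    rw [one_smul, hv, sub_eq_add_neg]
  have hg1 : g 1 = f (x - η' • G) := by rw [hgdef]; dsimp only; rw [hxv]
  rw [← hg1, ← hg0]
  linarith
set_option maxHeartbeats 2000000 in
/-- GD with constant learning rate, convex case. For a convex
`(ρ, K₀, K_ρ)`-smooth function with minimizer `w*`, gradient descent with the constant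
learning rate `η = (1/(8√2+8)) min{1/K₀, 1/(3^ρ K_ρ Δ₀^ρ)}` satisfies `Δ_{t+1} ≤ Δ_t` and
`f(w_{T−1}) − f(w*) ≤ D₀²/(2ηT) ≤ (4√2+4)(K₀D₀² + 3^ρ K_ρ Δ₀^ρ D₀²)/T`. -/
theorem statement11 (d : ℕ) (f : EuclideanSpace ℝ (Fin d) → ℝ)
    (hf : ContDiff ℝ 2 f)
    (hconv : ConvexOn ℝ Set.univ f)
    (ρ K0 Kρ : ℝ) (hρ : 0 < ρ) (hK0 : 0 < K0) (hKρ : 0 < Kρ)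
    (fstar : ℝ) (hglb : IsGLB (Set.range f) fstar)
    (hsmooth : ∀ v, ‖fderiv ℝ (gradient f) v‖ ≤ K0 + Kρ * (f v - fstar) ^ ρ)
    (wstar : EuclideanSpace ℝ (Fin d))
    (hmin : ∀ v, f wstar ≤ f v) (hfstar : f wstar = fstar)
    (w : ℕ → EuclideanSpace ℝ (Fin d))
    (η : ℝ)
    (hη : η = (1 / (8 * Real.sqrt 2 + 8)) *
      min (1 / K0) (1 / (3 ^ ρ * Kρ * (f (w 0) - fstar) ^ ρ)))
    (hrec : ∀ t, w (t + 1) = w t - η • gradient f (w t))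
    (T : ℕ) (hT : 1 ≤ T) :
    (∀ t < T, f (w (t + 1)) - fstar ≤ f (w t) - fstar) ∧
    (f (w (T - 1)) - f wstar ≤ ‖w 0 - wstar‖ ^ 2 / (2 * η * T)) ∧
    (‖w 0 - wstar‖ ^ 2 / (2 * η * T) ≤
      (4 * Real.sqrt 2 + 4) * (K0 * ‖w 0 - wstar‖ ^ 2 +
        3 ^ ρ * Kρ * (f (w 0) - fstar) ^ ρ * ‖w 0 - wstar‖ ^ 2) / T) := by
  have hlb : ∀ v, fstar ≤ f v := fun v => hfstar ▸ hmin v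
  have hfd : Differentiable ℝ f := hf.differentiable (by norm_num)
  have hΔ0nn : 0 ≤ f (w 0) - fstar := sub_nonneg.2 (hlb _)
  have hs2 : (0:ℝ) ≤ Real.sqrt 2 := Real.sqrt_nonneg 2
  have hc : (0:ℝ) < 8 * Real.sqrt 2 + 8 := by linarith
  rcases hΔ0nn.eq_or_lt with hzero | hpos
  · -- degenerate case: f (w 0) = fstar, η = 0
    have hη0 : η = 0 := by
      rw [hη]
      have h1 : (f (w 0) - fstar) ^ ρ = 0 := by
        rw [← hzero, Real.zero_rpow hρ.ne']
      rw [h1, mul_zero, div_zero, min_eq_right (by positivity : (0:ℝ) ≤ 1 / K0), mul_zero]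
    have hw : ∀ t, w t = w 0 := by
      intro t
      induction t with
      | zero => rfl
      | succ n ih => rw [hrec n, hη0, zero_smul, sub_zero, ih]
    have hfw0 : f (w 0) = fstar := by linarith
    refine ⟨fun t _ => by rw [hw (t + 1), hw t], ?_, ?_⟩
    · have h2 : (2:ℝ) * η * T = 0 := by rw [hη0]; ring
      rw [h2, div_zero, hw (T - 1), hfstar, hfw0]
      linarith
    · have h2 : (2:ℝ) * η * T = 0 := by rw [hη0]; ring
      rw [h2, div_zero]
      apply div_nonneg _ (Nat.cast_nonneg T)
      have h3 : (0:ℝ) ≤ (f (w 0) - fstar) ^ ρ := Real.rpow_nonneg hΔ0nn ρ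
      have h4 : (0:ℝ) ≤ (3:ℝ) ^ ρ := (Real.rpow_pos_of_pos (by norm_num) ρ).le
      have h5 : (0:ℝ) ≤ ‖w 0 - wstar‖ ^ 2 := sq_nonneg _
      have h6 : (0:ℝ) ≤ 4 * Real.sqrt 2 + 4 := by linarith
      apply mul_nonneg h6
      have := mul_nonneg (mul_nonneg (mul_nonneg h4 hKρ.le) h3) h5
      nlinarith [mul_nonneg hK0.le h5]
  -- main case
  set Δ0 : ℝ := f (w 0) - fstar with hΔ0def
  set M : ℝ := 3 ^ ρ * Kρ * Δ0 ^ ρ with hMdef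
  set c : ℝ := 8 * Real.sqrt 2 + 8 with hcdef
  have h3ρ : (1:ℝ) ≤ 3 ^ ρ := Real.one_le_rpow (by norm_num) hρ.le
  have hΔρpos : 0 < Δ0 ^ ρ := Real.rpow_pos_of_pos hpos ρ
  have h3pos : (0:ℝ) < 3 ^ ρ := Real.rpow_pos_of_pos (by norm_num) ρ
  have hMpos : 0 < M := by rw [hMdef]; positivity
  set L0 : ℝ := K0 + Kρ * Δ0 ^ ρ with hL0def
  have hL0pos : 0 < L0 := by rw [hL0def]; positivity
  have hKρΔM : Kρ * Δ0 ^ ρ ≤ M := by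
    rw [hMdef]
    nlinarith [mul_pos hKρ hΔρpos]
  set μ : ℝ := min (1 / K0) (1 / M) with hμdef
  have hμpos : 0 < μ := lt_min (by positivity) (by positivity)
  have hηeq : η = (1 / c) * μ := hη
  have hηpos : 0 < η := by rw [hηeq]; positivity
  have hμK0 : μ * K0 ≤ 1 := by
    have h1 : μ ≤ 1 / K0 := min_le_left _ _
    calc μ * K0 ≤ (1 / K0) * K0 := mul_le_mul_of_nonneg_right h1 hK0.le
      _ = 1 := one_div_mul_cancel hK0.ne'
  have hμM : μ * M ≤ 1 := by
    have h1 : μ ≤ 1 / M := min_le_right _ _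
    calc μ * M ≤ (1 / M) * M := mul_le_mul_of_nonneg_right h1 hMpos.le
      _ = 1 := one_div_mul_cancel hMpos.ne'
  have hcη : c * η = μ := by rw [hηeq]; field_simp
  have hηL2 : η * L0 * c ≤ 2 := by
    have h1 : η * L0 * c = μ * K0 + μ * (Kρ * Δ0 ^ ρ) := by
      rw [← hcη, hL0def]; ring
    have h2 : μ * (Kρ * Δ0 ^ ρ) ≤ μ * M := mul_le_mul_of_nonneg_left hKρΔM hμpos.le
    linarith
  have hc8 : (8:ℝ) ≤ c := by rw [hcdef]; linarith
  have hηL0nn : 0 ≤ η * L0 := by positivity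
  have h4ηL0 : 4 * (η * L0) ≤ 1 := by
    nlinarith [mul_nonneg (by linarith : (0:ℝ) ≤ c - 8) hηL0nn]
  have hηL1 : η * L0 ≤ 1 := by linarith
  have hLip0 : ∀ t : ℕ, f (w t) - fstar ≤ Δ0 →
      ∀ y, f y ≤ f (w t) → ‖fderiv ℝ (gradient f) y‖ ≤ L0 := by
    intro t ht y hy
    have h1 : 0 ≤ f y - fstar := sub_nonneg.2 (hlb y)
    have h2 : f y - fstar ≤ Δ0 := by linarith
    have h3 := Real.rpow_le_rpow h1 h2 hρ.le
    calc ‖fderiv ℝ (gradient f) y‖ ≤ K0 + Kρ * (f y - fstar) ^ ρ := hsmooth y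
      _ ≤ L0 := by
          rw [hL0def]
          nlinarith [hKρ.le]
  have hdesc : ∀ t : ℕ, f (w t) - fstar ≤ Δ0 →
      f (w (t + 1)) ≤ f (w t) - η / 2 * ‖gradient f (w t)‖ ^ 2 := by
    intro t ht
    rw [hrec t]
    exact descent_core' f hf hconv L0 hL0pos (w t) (hLip0 t ht) η hηpos.le hηL1
  have hΔle : ∀ t : ℕ, f (w t) - fstar ≤ Δ0 := by
    intro t
    induction t with
    | zero => exact le_of_eq rfl
    | succ n ih =>
        have h1 := hdesc n ih
        have h2 : (0:ℝ) ≤ η / 2 * ‖gradient f (w n)‖ ^ 2 := by positivity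
        linarith
  have hstep : ∀ t : ℕ, f (w (t + 1)) ≤ f (w t) - η / 2 * ‖gradient f (w t)‖ ^ 2 :=
    fun t => hdesc t (hΔle t)
  have hmono : ∀ t : ℕ, f (w (t + 1)) - fstar ≤ f (w t) - fstar := by
    intro t
    have h1 := hstep t
    have h2 : (0:ℝ) ≤ η / 2 * ‖gradient f (w t)‖ ^ 2 := by positivity
    linarith
  have hgradsq : ∀ t : ℕ, ‖gradient f (w t)‖ ^ 2 ≤ 2 * L0 * (f (w t) - fstar) := by
    intro t
    have hrecip : (1 / L0) * L0 ≤ 1 := by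
      rw [one_div, inv_mul_cancel₀ hL0pos.ne']
    have h := descent_core' f hf hconv L0 hL0pos (w t) (hLip0 t (hΔle t))
      (1 / L0) (by positivity) hrecip
    have h2 := hlb (w t - (1 / L0) • gradient f (w t))
    have h3 : (1 / L0) / 2 * ‖gradient f (w t)‖ ^ 2 ≤ f (w t) - fstar := by linarith
    calc ‖gradient f (w t)‖ ^ 2
        = 2 * L0 * ((1 / L0) / 2 * ‖gradient f (w t)‖ ^ 2) := by
          field_simp
      _ ≤ 2 * L0 * (f (w t) - fstar) := by
          apply mul_le_mul_of_nonneg_left h3 (by positivity)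
  have hfo : ∀ t : ℕ, f (w t) - fstar ≤ ⟪gradient f (w t), w t - wstar⟫ := by
    intro t
    have h := convex_first_order' f hfd hconv (w t) wstar
    have h2 : wstar - w t = -(w t - wstar) := (neg_sub _ _).symm
    rw [h2, inner_neg_right] at h
    have h3 : f wstar = fstar := hfstar
    linarith
  have hdist : ∀ t : ℕ, ‖w (t + 1) - wstar‖ ^ 2 ≤
      ‖w t - wstar‖ ^ 2 - 2 * η * (f (w (t + 1)) - fstar) := by
    intro t
    have hexp : ‖w (t + 1) - wstar‖ ^ 2 = ‖w t - wstar‖ ^ 2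
        - 2 * (η * ⟪gradient f (w t), w t - wstar⟫) + η ^ 2 * ‖gradient f (w t)‖ ^ 2 := by
      rw [hrec t]
      have h1 : w t - η • gradient f (w t) - wstar
          = (w t - wstar) - η • gradient f (w t) := by abel
      rw [h1, norm_sub_sq_real, real_inner_smul_right, norm_smul, Real.norm_eq_abs,
        mul_pow, sq_abs, real_inner_comm]
    have h1 := hfo t
    have h2 := hstep t
    nlinarith [hexp, mul_le_mul_of_nonneg_left h1 (by linarith : (0:ℝ) ≤ 2 * η),
      mul_le_mul_of_nonneg_left h2 (by linarith : (0:ℝ) ≤ 2 * η)]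
  have htel : ∀ t : ℕ, ‖w t - wstar‖ ^ 2 + 2 * η * t * (f (w t) - fstar)
      ≤ ‖w 0 - wstar‖ ^ 2 := by
    intro t
    induction t with
    | zero => simp
    | succ n ih =>
        have h1 := hdist n
        have h2 := hmono n
        have h3 : 0 ≤ f (w (n + 1)) - fstar := sub_nonneg.2 (hlb _)
        have h4 : (0:ℝ) ≤ 2 * η * n := by positivity
        push_cast
        nlinarith [mul_le_mul_of_nonneg_left h2 h4]
  have h2ηΔ : ∀ t : ℕ, 2 * η * (f (w t) - fstar) ≤ ‖w t - wstar‖ ^ 2 := by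
    intro t
    have h3 : 0 ≤ f (w t) - fstar := sub_nonneg.2 (hlb _)
    rcases h3.eq_or_lt with h0 | hpos'
    · rw [← h0, mul_zero]
      exact sq_nonneg _
    · have h1 := hfo t
      have h2 := hgradsq t
      have h4 : ⟪gradient f (w t), w t - wstar⟫ ≤ ‖gradient f (w t)‖ * ‖w t - wstar‖ :=
        real_inner_le_norm _ _
      have h5 : (f (w t) - fstar) ^ 2 ≤ (‖gradient f (w t)‖ * ‖w t - wstar‖) ^ 2 :=
        pow_le_pow_left₀ h3 (h1.trans h4) 2
      have h6 : (f (w t) - fstar) * (f (w t) - fstar)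
          ≤ (2 * L0 * ‖w t - wstar‖ ^ 2) * (f (w t) - fstar) := by
        nlinarith [mul_le_mul_of_nonneg_right h2 (sq_nonneg ‖w t - wstar‖)]
      have h7 : f (w t) - fstar ≤ 2 * L0 * ‖w t - wstar‖ ^ 2 :=
        le_of_mul_le_mul_right h6 hpos'
      have h8 : 2 * η * (f (w t) - fstar) ≤ 2 * η * (2 * L0 * ‖w t - wstar‖ ^ 2) :=
        mul_le_mul_of_nonneg_left h7 (by positivity)
      have h9 : 4 * (η * L0) * ‖w t - wstar‖ ^ 2 ≤ 1 * ‖w t - wstar‖ ^ 2 :=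
        mul_le_mul_of_nonneg_right h4ηL0 (sq_nonneg _)
      nlinarith
  obtain ⟨t', rfl⟩ : ∃ t', T = t' + 1 := ⟨T - 1, (Nat.succ_pred_eq_of_pos hT).symm⟩
  have hTc : ((t' + 1 : ℕ) : ℝ) = (t' : ℝ) + 1 := by push_cast; ring
  have hTpos : (0:ℝ) < 2 * η * ((t' : ℝ) + 1) := by positivity
  refine ⟨fun t _ => hmono t, ?_, ?_⟩
  · simp only [Nat.add_sub_cancel]
    rw [hfstar, hTc, le_div_iff₀ hTpos]
    have htel' := htel t'
    have hextra := h2ηΔ t'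
    nlinarith [htel', hextra]
  · rw [hTc, div_le_div_iff₀ hTpos (by positivity : (0:ℝ) < (t' : ℝ) + 1)]
    set r : ℝ := 4 * Real.sqrt 2 + 4 with hrdef
    have hrpos : 0 < r := by rw [hrdef]; linarith
    have hKM : 0 < K0 + M := by positivity
    have hμlow : 1 / (K0 + M) ≤ μ := by
      apply le_min
      · exact one_div_le_one_div_of_le hK0 (by linarith)
      · exact one_div_le_one_div_of_le hMpos (by linarith)
    have hηlow : 1 / (c * (K0 + M)) ≤ η := by
      rw [hηeq]
      calc 1 / (c * (K0 + M)) = (1 / c) * (1 / (K0 + M)) :=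
            (one_div_mul_one_div c (K0 + M)).symm
        _ ≤ (1 / c) * μ := by
            apply mul_le_mul_of_nonneg_left hμlow (by positivity)
    have hr2c : r * 2 = c := by rw [hrdef, hcdef]; ring
    have hfact : 1 ≤ r * (2 * η * (K0 + M)) := by
      have h1 : r * (2 * (1 / (c * (K0 + M))) * (K0 + M)) = 1 := by
        rw [← hr2c]
        field_simp
      have h2 : 2 * (1 / (c * (K0 + M))) * (K0 + M) ≤ 2 * η * (K0 + M) := by
        apply mul_le_mul_of_nonneg_right _ hKM.le
        linarith
      calc (1:ℝ) = r * (2 * (1 / (c * (K0 + M))) * (K0 + M)) := h1.symm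
        _ ≤ r * (2 * η * (K0 + M)) := mul_le_mul_of_nonneg_left h2 hrpos.le
    have hkey : 1 * (‖w 0 - wstar‖ ^ 2 * ((t' : ℝ) + 1))
        ≤ (r * (2 * η * (K0 + M))) * (‖w 0 - wstar‖ ^ 2 * ((t' : ℝ) + 1)) :=
      mul_le_mul_of_nonneg_right hfact (by positivity)
    nlinarith [hkey]
end
end

section
/- For every K₁ > 0, every Δ > 0, every accuracy ε > 0 with ε ≤ min{2√K₁·Δ/5, 1}, and every non-increasing sequence of positive learning rates (η_t)_{t≥0}, there exist a twice differentiable function f : ℝ → ℝ and an initial point w₀ ∈ ℝ such that: f is bounded below with f* = inf f > −∞; f is (1, ε√K₁, 4πK₁)-smooth, i.e. |f''(x)| ≤ ε√K₁ + 4πK₁(f(x) − f*) for all x ∈ ℝ; f(w₀) − f* ≤ 8Δ; and the gradient descent iterates w_{t+1} = w_t − η_t f'(w_t) satisfy |f'(w_t)| > ε for every t < K₁Δ²/(4ε²). -/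
open Real

noncomputable section
namespace S12

def tailF (c l u : ℝ) : ℝ := 2*c/l * (Real.exp (-(l*u)) - (Real.exp (-(l*u)))^2/4)
def tailD (c l u : ℝ) : ℝ := c * ((Real.exp (-(l*u)))^2 - 2*Real.exp (-(l*u)))
def tailD2 (c l u : ℝ) : ℝ := 2*c*l*(Real.exp (-(l*u)) - (Real.exp (-(l*u)))^2)
def toothF (c p L z x : ℝ) : ℝ := L - c*p/(2*π) * Real.sin (2*π/p*(x - z))
def toothD (c p z x : ℝ) : ℝ := -c * Real.cos (2*π/p*(x - z))
def toothD2 (c p z x : ℝ) : ℝ := 2*π*c/p * Real.sin (2*π/p*(x - z))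

lemma tailF_zero (c l : ℝ) : tailF c l 0 = 3*c/(2*l) := by
  simp [tailF]; ring
lemma tailD_zero (c l : ℝ) : tailD c l 0 = -c := by simp [tailD]; ring
lemma tailD2_zero (c l : ℝ) : tailD2 c l 0 = 0 := by simp [tailD2]

lemma exp_mem (l u : ℝ) (hl : 0 < l) (hu : 0 ≤ u) :
    0 < Real.exp (-(l*u)) ∧ Real.exp (-(l*u)) ≤ 1 := by
  refine ⟨Real.exp_pos _, Real.exp_le_one_iff.mpr (by nlinarith)⟩

lemma tailF_pos (c l u : ℝ) (hc : 0 < c) (hl : 0 < l) (hu : 0 ≤ u) :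
    0 < tailF c l u := by
  obtain ⟨h1, h2⟩ := exp_mem l u hl hu
  have : 0 < Real.exp (-(l*u)) - (Real.exp (-(l*u)))^2/4 := by nlinarith
  exact mul_pos (by positivity) this

lemma tailF_le (c l u : ℝ) (hc : 0 < c) (hl : 0 < l) (hu : 0 ≤ u) :
    tailF c l u ≤ 3*c/(2*l) := by
  obtain ⟨h1, h2⟩ := exp_mem l u hl hu
  set E := Real.exp (-(l*u)) with hE
  have key : 0 ≤ (1-E)*(3-E) := by nlinarith
  rw [tailF]
  rw [div_mul_eq_mul_div, div_le_div_iff₀ (by positivity) (by positivity)]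
  nlinarith [mul_nonneg (mul_nonneg hc.le hl.le) key]

lemma tailD2_abs_le (c l u : ℝ) (hc : 0 < c) (hl : 0 < l) (hu : 0 ≤ u) :
    |tailD2 c l u| ≤ l^2 * tailF c l u := by
  obtain ⟨h1, h2⟩ := exp_mem l u hl hu
  have h3 : 0 ≤ tailD2 c l u := by
    rw [tailD2]
    nlinarith [mul_nonneg (mul_nonneg (mul_nonneg (by norm_num : (0:ℝ) ≤ 2) hc.le) hl.le)
      (mul_nonneg h1.le (sub_nonneg.2 h2))]
  rw [abs_of_nonneg h3, tailD2, tailF]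
  have : l^2 * (2*c/l * (Real.exp (-(l*u)) - (Real.exp (-(l*u)))^2/4))
      = 2*c*l*(Real.exp (-(l*u)) - (Real.exp (-(l*u)))^2/4) := by
    field_simp
  rw [this]
  nlinarith [mul_nonneg (mul_nonneg hc.le hl.le) (sq_nonneg (Real.exp (-(l*u))))]

lemma tendsto_tailF (c l : ℝ) (hl : 0 < l) :
    Filter.Tendsto (tailF c l) Filter.atTop (nhds 0) := by
  have h1 : Filter.Tendsto (fun u : ℝ => l*u) Filter.atTop Filter.atTop :=
    Filter.Tendsto.const_mul_atTop hl Filter.tendsto_id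
  have h0 : Filter.Tendsto (fun u : ℝ => -(l*u)) Filter.atTop Filter.atBot :=
    Filter.tendsto_neg_atTop_atBot.comp h1
  have hEt : Filter.Tendsto (fun u : ℝ => Real.exp (-(l*u))) Filter.atTop (nhds 0) :=
    Real.tendsto_exp_atBot.comp h0
  have : Filter.Tendsto (fun u : ℝ => 2*c/l * (Real.exp (-(l*u)) - (Real.exp (-(l*u)))^2/4))
      Filter.atTop (nhds (2*c/l * (0 - 0^2/4))) :=
    ((hEt.sub ((hEt.pow 2).div_const 4)).const_mul _)
  show Filter.Tendsto (fun u => tailF c l u) _ _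
  simpa [tailF] using this

lemma sin_nat_two_pi (k : ℕ) : Real.sin (k*(2*π)) = 0 := by
  have := Real.sin_int_mul_pi (2*k : ℤ)
  push_cast at this ⊢
  rw [show (k:ℝ)*(2*π) = 2*(k:ℝ)*π by ring]
  exact this

lemma cos_nat_two_pi (k : ℕ) : Real.cos (k*(2*π)) = 1 := Real.cos_nat_mul_two_pi k

lemma hasDerivAt_tailF (c l u : ℝ) (hl : l ≠ 0) :
    HasDerivAt (tailF c l) (tailD c l u) u := by
  have h1 : HasDerivAt (fun u : ℝ => Real.exp (-(l*u))) (-l * Real.exp (-(l*u))) u := by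
    simpa [mul_comm] using (((hasDerivAt_id u).const_mul l).neg).exp
  have h2 := ((h1.sub ((h1.pow 2).div_const 4)).const_mul (2*c/l))
  refine h2.congr_deriv ?_
  rw [tailD]
  field_simp [tailD]
  ring

lemma hasDerivAt_tailD (c l u : ℝ) :
    HasDerivAt (tailD c l) (tailD2 c l u) u := by
  have h1 : HasDerivAt (fun u : ℝ => Real.exp (-(l*u))) (-l * Real.exp (-(l*u))) u := by
    simpa [mul_comm] using (((hasDerivAt_id u).const_mul l).neg).exp
  have h2 := (((h1.pow 2).sub (h1.const_mul 2)).const_mul c)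
  refine h2.congr_deriv ?_
  simp [tailD2]
  ring

lemma hasDerivAt_toothF (c p L z x : ℝ) (hp : p ≠ 0) :
    HasDerivAt (toothF c p L z) (toothD c p z x) x := by
  have h1 : HasDerivAt (fun x : ℝ => 2*π/p*(x - z)) (2*π/p) x := by
    simpa using ((hasDerivAt_id x).sub_const z).const_mul (2*π/p)
  have h2 := ((h1.sin).const_mul (c*p/(2*π))).const_sub L
  refine h2.congr_deriv ?_
  have hπ := Real.pi_ne_zero
  rw [toothD]
  field_simp [toothD]

lemma hasDerivAt_toothD (c p z x : ℝ) (hp : p ≠ 0) :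
    HasDerivAt (toothD c p z) (toothD2 c p z x) x := by
  have h1 : HasDerivAt (fun x : ℝ => 2*π/p*(x - z)) (2*π/p) x := by
    simpa using ((hasDerivAt_id x).sub_const z).const_mul (2*π/p)
  have h2 := ((h1.cos).const_mul (-c))
  refine h2.congr_deriv ?_
  have hπ := Real.pi_ne_zero
  rw [toothD2]
  field_simp [toothD2]

lemma glue_hasDerivAt {f F G : ℝ → ℝ} {a y : ℝ}
    (hF : HasDerivAt F y a) (hG : HasDerivAt G y a)
    (h1 : f =ᶠ[nhdsWithin a (Set.Iic a)] F)
    (h2 : f =ᶠ[nhdsWithin a (Set.Ici a)] G) :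
    HasDerivAt f y a := by
  have hFa : f a = F a := h1.eq_of_nhdsWithin (Set.mem_Iic.mpr le_rfl)
  have hGa : f a = G a := h2.eq_of_nhdsWithin (Set.mem_Ici.mpr le_rfl)
  have t1 : HasDerivWithinAt f y (Set.Iic a) a :=
    (hF.hasDerivWithinAt).congr_of_eventuallyEq h1 hFa
  have t2 : HasDerivWithinAt f y (Set.Ici a) a :=
    (hG.hasDerivWithinAt).congr_of_eventuallyEq h2 hGa
  have := t1.union t2
  rw [Set.Iic_union_Ici] at this
  exact hasDerivWithinAt_univ.mp this
def X (c : ℝ) (η : ℕ → ℝ) (t : ℕ) : ℝ := c * ∑ u ∈ Finset.range t, η u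

def idx (c : ℝ) (η : ℕ → ℝ) (m : ℕ) (x : ℝ) : ℕ := Nat.findGreatest (fun t => X c η t ≤ x) m

def per (c h : ℝ) (η : ℕ → ℝ) (t : ℕ) : ℝ := c * η t / (⌈η t / h⌉₊ : ℝ)

/-- The function. -/
def FF (c l L h Δ : ℝ) (η : ℕ → ℝ) (m : ℕ) (x : ℝ) : ℝ :=
  if x < 0 then L + tailF c l 0 - tailF c l (-x)
  else if x < X c η m then toothF c (per c h η (idx c η m x)) L (X c η (idx c η m x)) x
  else if x < X c η m + 3*Δ/c then L - c*(x - X c η m)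
  else tailF c l (x - (X c η m + 3*Δ/c))

/-- Its derivative. -/
def GG (c l h Δ : ℝ) (η : ℕ → ℝ) (m : ℕ) (x : ℝ) : ℝ :=
  if x < 0 then tailD c l (-x)
  else if x < X c η m then toothD c (per c h η (idx c η m x)) (X c η (idx c η m x)) x
  else if x < X c η m + 3*Δ/c then -c
  else tailD c l (x - (X c η m + 3*Δ/c))

/-- Its second derivative. -/
def GG2 (c l h Δ : ℝ) (η : ℕ → ℝ) (m : ℕ) (x : ℝ) : ℝ :=
  if x < 0 then -tailD2 c l (-x)
  else if x < X c η m then toothD2 c (per c h η (idx c η m x)) (X c η (idx c η m x)) x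
  else if x < X c η m + 3*Δ/c then 0
  else tailD2 c l (x - (X c η m + 3*Δ/c))

lemma toothF_left (c p L z : ℝ) : toothF c p L z z = L := by simp [toothF]
lemma toothD_left (c p z : ℝ) : toothD c p z z = -c := by simp [toothD]
lemma toothD2_left (c p z : ℝ) : toothD2 c p z z = 0 := by simp [toothD2]

lemma tooth_arg (p z : ℝ) (k : ℕ) (hp : p ≠ 0) : 2*π/p*(z + k*p - z) = k*(2*π) := by
  field_simp; ring

lemma toothF_right (c p L z : ℝ) (k : ℕ) (hp : p ≠ 0) : toothF c p L z (z + k*p) = L := by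
  rw [toothF, tooth_arg p z k hp, sin_nat_two_pi]; simp

lemma toothD_right (c p z : ℝ) (k : ℕ) (hp : p ≠ 0) : toothD c p z (z + k*p) = -c := by
  rw [toothD, tooth_arg p z k hp, cos_nat_two_pi]; simp

lemma toothD2_right (c p z : ℝ) (k : ℕ) (hp : p ≠ 0) : toothD2 c p z (z + k*p) = 0 := by
  rw [toothD2, tooth_arg p z k hp, sin_nat_two_pi]; simp

lemma toothF_ge (c p L z x : ℝ) (hc : 0 < c) (hp : 0 < p) :
    L - c*p/(2*π) ≤ toothF c p L z x := by
  have h1 := Real.sin_le_one (2*π/p*(x - z))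
  have h2 : 0 ≤ c*p/(2*π) := by positivity
  have := mul_le_mul_of_nonneg_left h1 h2
  rw [toothF]; nlinarith

lemma toothD2_abs_le (c p z x : ℝ) (hc : 0 < c) (hp : 0 < p) :
    |toothD2 c p z x| ≤ 2*π*c/p := by
  rw [toothD2, abs_mul]
  have h2 : (0:ℝ) ≤ 2*π*c/p := by positivity
  calc |2*π*c/p| * |Real.sin (2*π/p*(x - z))| ≤ |2*π*c/p| * 1 := by
        exact mul_le_mul_of_nonneg_left (Real.abs_sin_le_one _) (abs_nonneg _)
      _ = 2*π*c/p := by rw [mul_one, abs_of_nonneg h2]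

end S12

open S12

set_option maxHeartbeats 1000000 in
/-- Lower bound for GD with non-increasing learning rates. -/
theorem statement12 (K1 Δ ε : ℝ) (hK1 : 0 < K1) (hΔ : 0 < Δ)
    (hε0 : 0 < ε) (hε : ε ≤ min (2 * Real.sqrt K1 * Δ / 5) 1)
    (η : ℕ → ℝ) (hηpos : ∀ t, 0 < η t) (hηmono : ∀ s t, s ≤ t → η t ≤ η s) :
    ∃ (f : ℝ → ℝ) (w0 fstar : ℝ),
      (Differentiable ℝ f ∧ Differentiable ℝ (deriv f)) ∧
      IsGLB (Set.range f) fstar ∧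
      (∀ x : ℝ, |deriv (deriv f) x| ≤ ε * Real.sqrt K1 + 4 * π * K1 * (f x - fstar)) ∧
      f w0 - fstar ≤ 8 * Δ ∧
      ∀ w : ℕ → ℝ, w 0 = w0 → (∀ t, w (t + 1) = w t - η t * deriv f (w t)) →
        ∀ t : ℕ, (t : ℝ) < K1 * Δ ^ 2 / (4 * ε ^ 2) → ε < |deriv f (w t)| := by
  have hπ := Real.pi_pos
  have hπ3 := Real.pi_gt_three
  have hr : 0 < Real.sqrt K1 := Real.sqrt_pos.mpr hK1
  have hrsq : Real.sqrt K1 ^ 2 = K1 := Real.sq_sqrt hK1.le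
  have hε1 : 5 * ε ≤ 2 * Real.sqrt K1 * Δ := by
    have h := le_trans hε (min_le_left _ _); linarith
  set c : ℝ := 2*ε with hc_def
  have hc : 0 < c := by positivity
  set l : ℝ := 2*Real.sqrt (π*K1) with hl_def
  have hl : 0 < l := by
    have := Real.sqrt_pos.mpr (mul_pos hπ hK1); positivity
  have hlsq : l^2 = 4*(π*K1) := by
    rw [hl_def, mul_pow, Real.sq_sqrt (by positivity)]; ring
  set sh : ℝ := 1/(K1*Δ) with hsh_def
  have hsh : 0 < sh := by positivity
  set T : ℝ := K1 * Δ ^ 2 / (4 * ε ^ 2) with hT_def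
  have hPex : ∃ t : ℕ, η t ≤ sh ∨ T ≤ (t:ℝ) := ⟨⌈T⌉₊, Or.inr (Nat.le_ceil T)⟩
  set m : ℕ := Nat.find hPex with hm_def
  have hm_spec : η m ≤ sh ∨ T ≤ (m:ℝ) := Nat.find_spec hPex
  have hm_min : ∀ t, t < m → sh < η t ∧ (t:ℝ) < T := by
    intro t ht
    have := Nat.find_min hPex ht
    push_neg at this
    exact this
  have hV : tailF c l 0 = 3*c/(2*l) := tailF_zero c l
  have hVpos : 0 < tailF c l 0 := by rw [hV]; positivity
  have hl3r : 3*Real.sqrt K1 < l := by nlinarith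
  have hVΔ : tailF c l 0 ≤ Δ := by
    rw [hV, div_le_iff₀ (by positivity)]
    nlinarith
  have hε2 : ε^2 ≤ (4/25)*(K1*Δ^2) := by
    nlinarith [mul_le_mul hε1 hε1 (by positivity) (by positivity)]
  have hdip : c*(c*sh)/(2*π) ≤ 2*Δ := by
    rw [hc_def, hsh_def, div_le_iff₀ (by positivity)]
    have h4 : (2*ε)*((2*ε)*(1/(K1*Δ))) = 4*ε^2/(K1*Δ) := by field_simp; ring
    rw [h4, div_le_iff₀ (by positivity)]
    nlinarith
  set L : ℝ := 3*Δ + tailF c l 0 with hL_def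
  have hLΔ : 3*Δ ≤ L ∧ L ≤ 4*Δ := by constructor <;> [linarith; linarith]
  set xe : ℝ := X c η m + 3*Δ/c with hxe_def
  set f := FF c l L sh Δ η m with hf_def
  set g := GG c l sh Δ η m with hg_def
  set g2 := GG2 c l sh Δ η m with hg2_def
  -- basic facts about X
  have hXsucc : ∀ t, X c η (t+1) = X c η t + c * η t := by
    intro t; rw [X, X, Finset.sum_range_succ]; ring
  have hX0 : X c η 0 = 0 := by simp [X]
  have hXS : StrictMono (X c η) := by
    apply strictMono_nat_of_lt_succ
    intro t; rw [hXsucc]; nlinarith [hηpos t]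
  have hXnn : ∀ t, 0 ≤ X c η t := by
    intro t; rw [← hX0]; exact hXS.monotone (Nat.zero_le t)
  have hxegt : X c η m < xe := by
    rw [hxe_def]; have : 0 < 3*Δ/c := by positivity
    linarith
  have hxepos : 0 < xe := lt_of_le_of_lt (hXnn m) hxegt
  -- facts about per
  have hper : ∀ t, t < m → c*sh/2 ≤ per c sh η t ∧ per c sh η t ≤ c*sh ∧ 0 < per c sh η t
      ∧ (⌈η t / sh⌉₊ : ℝ) * per c sh η t = c * η t := by
    intro t ht
    obtain ⟨h1, _⟩ := hm_min t ht
    have hηt : 0 < η t := hηpos t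
    have hq : 1 ≤ η t / sh := (one_le_div₀ hsh).mpr h1.le
    have hkge : η t / sh ≤ (⌈η t / sh⌉₊ : ℝ) := Nat.le_ceil _
    have hkle : (⌈η t / sh⌉₊ : ℝ) ≤ 2 * (η t / sh) := by
      have := Nat.ceil_lt_add_one (by linarith : (0:ℝ) ≤ η t / sh)
      linarith
    have hkpos : (0:ℝ) < (⌈η t / sh⌉₊ : ℝ) := by linarith
    have hppos : 0 < per c sh η t := by
      rw [per]; positivity
    refine ⟨?_, ?_, hppos, ?_⟩
    · rw [per, le_div_iff₀ hkpos]
      calc c*sh/2 * (⌈η t / sh⌉₊ : ℝ) ≤ c*sh/2 * (2*(η t / sh)) :=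
            mul_le_mul_of_nonneg_left hkle (by positivity)
        _ = c * η t := by field_simp
    · rw [per, div_le_iff₀ hkpos]
      have h5 : η t ≤ sh * (⌈η t / sh⌉₊ : ℝ) := by
        rw [div_le_iff₀ hsh] at hkge; linarith
      nlinarith
    · rw [per]; field_simp
  -- facts about idx
  have hidx : ∀ x, 0 ≤ x → x < X c η m →
      idx c η m x < m ∧ X c η (idx c η m x) ≤ x ∧ x < X c η (idx c η m x + 1) := by
    intro x hx0 hxm
    have hP : X c η (idx c η m x) ≤ x := by
      rw [idx]
      exact Nat.findGreatest_spec (P := fun t => X c η t ≤ x) (Nat.zero_le m)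
        (show X c η 0 ≤ x by rw [hX0]; exact hx0)
    have hle : idx c η m x ≤ m := by rw [idx]; exact Nat.findGreatest_le m
    have hlt : idx c η m x < m := by
      rcases lt_or_eq_of_le hle with h | h
      · exact h
      · exfalso; rw [h] at hP; linarith
    refine ⟨hlt, hP, ?_⟩
    have hng : ¬ X c η (idx c η m x + 1) ≤ x := by
      rw [idx]
      exact Nat.findGreatest_is_greatest (P := fun t => X c η t ≤ x)
        (by rw [idx] at *; exact Nat.lt_succ_self _) (by rw [idx] at hlt; exact hlt)
    exact not_le.mp hng
  have hidx_mem : ∀ t, t < m → ∀ x, X c η t ≤ x → x < X c η (t+1) → idx c η m x = t := by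
    intro t ht x h1 h2
    rw [idx, Nat.findGreatest_eq_iff]
    exact ⟨ht.le, fun _ => h1, fun n hn _ =>
      not_le.mpr (lt_of_lt_of_le h2 (hXS.monotone (Nat.succ_le_of_lt hn)))⟩
  -- region lemmas
  have hRA : ∀ x, x ≤ 0 → f x = L + tailF c l 0 - tailF c l (-x)
      ∧ g x = tailD c l (-x) ∧ g2 x = -tailD2 c l (-x) := by
    intro x hx
    rcases lt_or_eq_of_le hx with h | h
    · simp only [hf_def, hg_def, hg2_def, FF, GG, GG2, if_pos h]
      first | trivial | exact ⟨rfl, rfl, rfl⟩ | (refine ⟨?_, ?_, ?_⟩ <;> first | rfl | trivial)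
    · subst h
      simp only [hf_def, hg_def, hg2_def, FF, GG, GG2, if_neg (lt_irrefl (0:ℝ))]
      by_cases hm0 : (0:ℝ) < X c η m
      · have hm1 : 0 < m := by
          rcases Nat.eq_zero_or_pos m with h0 | h0
          · rw [h0, hX0] at hm0; exact absurd hm0 (lt_irrefl 0)
          · exact h0
        have hX1 : (0:ℝ) < X c η 1 := by
          rw [← hX0]; exact hXS Nat.zero_lt_one
        have hidx0 : idx c η m 0 = 0 := by
          apply hidx_mem 0 hm1 0 (le_of_eq hX0) (by simpa using hX1)
        rw [if_pos hm0, if_pos hm0, if_pos hm0, hidx0, hX0]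
        refine ⟨?_, ?_, ?_⟩
        · rw [toothF_left]; simp
        · rw [toothD_left]; simp [tailD_zero]
        · rw [toothD2_left]; simp [tailD2_zero]
      · have hXm0 : X c η m = 0 := le_antisymm (not_lt.mp hm0) (hXnn m)
        rw [if_neg hm0, if_neg hm0, if_neg hm0]
        have hpos : (0:ℝ) < X c η m + 3*Δ/c := by rw [hXm0]; positivity
        rw [if_pos hpos, if_pos hpos, if_pos hpos, hXm0]
        norm_num [tailD_zero, tailD2_zero]
  have hRB : ∀ t, t < m → ∀ x, X c η t ≤ x → x ≤ X c η (t+1) →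
      f x = toothF c (per c sh η t) L (X c η t) x
      ∧ g x = toothD c (per c sh η t) (X c η t) x
      ∧ g2 x = toothD2 c (per c sh η t) (X c η t) x := by
    intro t ht x h1 h2
    have hx0 : ¬ x < 0 := not_lt.mpr (le_trans (hXnn t) h1)
    obtain ⟨hpl, hpu, hppos, hkp⟩ := hper t ht
    rcases lt_or_eq_of_le h2 with h2' | h2'
    · have hxm : x < X c η m := lt_of_lt_of_le h2' (hXS.monotone ht)
      have hieq : idx c η m x = t := hidx_mem t ht x h1 h2'
      simp only [hf_def, hg_def, hg2_def, FF, GG, GG2, if_neg hx0, if_pos hxm, hieq]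
      first | trivial | exact ⟨rfl, rfl, rfl⟩ | (refine ⟨?_, ?_, ?_⟩ <;> first | rfl | trivial)
    · subst h2'
      have hxkp : X c η (t+1) = X c η t + (⌈η t / sh⌉₊ : ℝ) * per c sh η t := by
        rw [hXsucc, hkp]
      have halt : t + 1 < m ∨ t + 1 = m := by omega
      rcases halt with hm' | hm'
      · have hxm : X c η (t+1) < X c η m := hXS hm'
        have hieq : idx c η m (X c η (t+1)) = t+1 :=
          hidx_mem (t+1) hm' _ le_rfl (hXS (Nat.lt_succ_self _))
        simp only [hf_def, hg_def, hg2_def, FF, GG, GG2, if_neg hx0, if_pos hxm, hieq]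
        refine ⟨?_, ?_, ?_⟩
        · rw [toothF_left, hxkp, toothF_right c _ L _ _ hppos.ne']
        · rw [toothD_left, hxkp, toothD_right c _ _ _ hppos.ne']
        · rw [toothD2_left, hxkp, toothD2_right c _ _ _ hppos.ne']
      · have hxm : ¬ X c η (t+1) < X c η m := by rw [hm']; exact lt_irrefl _
        have hlt_xe : X c η (t+1) < X c η m + 3*Δ/c := by
          rw [hm']
          have : 0 < 3*Δ/c := by positivity
          linarith
        simp only [hf_def, hg_def, hg2_def, FF, GG, GG2, if_neg hx0, if_neg hxm,
          if_pos hlt_xe]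
        rw [← hm']
        refine ⟨?_, ?_, ?_⟩
        · rw [hxkp, toothF_right c _ L _ _ hppos.ne']; ring
        · rw [hxkp, toothD_right c _ _ _ hppos.ne']
        · rw [hxkp, toothD2_right c _ _ _ hppos.ne']
  have hRC : ∀ x, X c η m ≤ x → x ≤ xe →
      f x = L - c*(x - X c η m) ∧ g x = -c ∧ g2 x = 0 := by
    intro x h1 h2
    have hx0 : ¬ x < 0 := not_lt.mpr (le_trans (hXnn m) h1)
    have hxm : ¬ x < X c η m := not_lt.mpr h1
    simp only [hf_def, hg_def, hg2_def, FF, GG, GG2, if_neg hx0, if_neg hxm]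
    rcases lt_or_eq_of_le h2 with h | h
    · rw [hxe_def] at h
      rw [if_pos h, if_pos h, if_pos h]
      first | trivial | exact ⟨rfl, rfl, rfl⟩ | (refine ⟨?_, ?_, ?_⟩ <;> first | rfl | trivial)
    · subst h
      have hni : ¬ xe < X c η m + 3*Δ/c := by rw [hxe_def]; exact lt_irrefl _
      rw [if_neg hni, if_neg hni, if_neg hni, ← hxe_def, sub_self]
      refine ⟨?_, ?_, ?_⟩
      · rw [tailF_zero, hxe_def, hL_def, hV]
        field_simp
        ring
      · rw [tailD_zero]
      · rw [tailD2_zero]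
  have hRD : ∀ x, xe ≤ x →
      f x = tailF c l (x - xe) ∧ g x = tailD c l (x - xe) ∧ g2 x = tailD2 c l (x - xe) := by
    intro x h1
    have hx0 : ¬ x < 0 := not_lt.mpr (le_trans hxepos.le h1)
    have hxm : ¬ x < X c η m := not_lt.mpr (le_trans hxegt.le h1)
    have hxe' : ¬ x < X c η m + 3*Δ/c := by rw [← hxe_def]; exact not_lt.mpr h1
    simp only [hf_def, hg_def, hg2_def, FF, GG, GG2, if_neg hx0, if_neg hxm, if_neg hxe']
    first | trivial | exact ⟨rfl, rfl, rfl⟩ | (refine ⟨?_, ?_, ?_⟩ <;> first | rfl | trivial)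
  -- differentiability
  have hppos' : ∀ t, t < m → per c sh η t ≠ 0 := fun t ht => (hper t ht).2.2.1.ne'
  have hLT1 : ∀ x : ℝ, HasDerivAt (fun y => L + tailF c l 0 - tailF c l (-y)) (tailD c l (-x)) x := by
    intro x
    have h1 : HasDerivAt (fun y : ℝ => tailF c l (-y)) (tailD c l (-x) * (-1)) x :=
      (hasDerivAt_tailF c l (-x) hl.ne').comp x (hasDerivAt_neg x)
    have h2 := h1.const_sub (L + tailF c l 0)
    refine h2.congr_deriv ?_
    ring
  have hLT2 : ∀ x : ℝ, HasDerivAt (fun y => tailD c l (-y)) (-tailD2 c l (-x)) x := by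
    intro x
    have h1 : HasDerivAt (fun y : ℝ => tailD c l (-y)) (tailD2 c l (-x) * (-1)) x :=
      (hasDerivAt_tailD c l (-x)).comp x (hasDerivAt_neg x)
    convert h1 using 1; ring
  have hRT1 : ∀ x : ℝ, HasDerivAt (fun y => tailF c l (y - xe)) (tailD c l (x - xe)) x := by
    intro x
    simpa [Function.comp_def] using (hasDerivAt_tailF c l (x - xe) hl.ne').comp x ((hasDerivAt_id x).sub_const xe)
  have hRT2 : ∀ x : ℝ, HasDerivAt (fun y => tailD c l (y - xe)) (tailD2 c l (x - xe)) x := by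
    intro x
    simpa [Function.comp_def] using (hasDerivAt_tailD c l (x - xe)).comp x ((hasDerivAt_id x).sub_const xe)
  have hLIN1 : ∀ x : ℝ, HasDerivAt (fun y => L - c*(y - X c η m)) (-c) x := by
    intro x
    have h1 := (((hasDerivAt_id x).sub_const (X c η m)).const_mul c).const_sub L
    refine h1.congr_deriv ?_; ring
  have hLIN2 : ∀ x : ℝ, HasDerivAt (fun _ : ℝ => -c) 0 x := fun x => hasDerivAt_const x (-c)
  have hTOOTH1 : ∀ t, t < m → ∀ x : ℝ,
      HasDerivAt (toothF c (per c sh η t) L (X c η t)) (toothD c (per c sh η t) (X c η t) x) x :=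
    fun t ht x => hasDerivAt_toothF c _ L _ x (hppos' t ht)
  have hTOOTH2 : ∀ t, t < m → ∀ x : ℝ,
      HasDerivAt (toothD c (per c sh η t) (X c η t)) (toothD2 c (per c sh η t) (X c η t) x) x :=
    fun t ht x => hasDerivAt_toothD c _ _ x (hppos' t ht)
  have hTend : ∀ t, t < m → toothF c (per c sh η t) L (X c η t) (X c η (t+1)) = L
      ∧ toothD c (per c sh η t) (X c η t) (X c η (t+1)) = -c
      ∧ toothD2 c (per c sh η t) (X c η t) (X c η (t+1)) = 0 := by
    intro t ht
    have hxkp : X c η (t+1) = X c η t + (⌈η t / sh⌉₊ : ℝ) * per c sh η t := by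
      rw [hXsucc, (hper t ht).2.2.2]
    rw [hxkp]
    exact ⟨toothF_right _ _ _ _ _ (hppos' t ht), toothD_right _ _ _ _ (hppos' t ht),
      toothD2_right _ _ _ _ (hppos' t ht)⟩
  have hcongr : ∀ {fn F : ℝ → ℝ} {y x : ℝ} {s : Set ℝ}, s ∈ nhds x → Set.EqOn fn F s →
      HasDerivAt F y x → HasDerivAt fn y x := by
    intro fn F y x s hs hEq hF
    exact hF.congr_of_eventuallyEq (Filter.eventuallyEq_of_mem hs hEq)
  have hglue : ∀ {fn Fl Fr : ℝ → ℝ} {y a : ℝ} {sl sr : Set ℝ}, sl ∈ nhdsWithin a (Set.Iic a) →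
      sr ∈ nhdsWithin a (Set.Ici a) → Set.EqOn fn Fl sl → Set.EqOn fn Fr sr →
      HasDerivAt Fl y a → HasDerivAt Fr y a → HasDerivAt fn y a := by
    intro fn Fl Fr y a sl sr hsl hsr hEl hEr hFl hFr
    exact glue_hasDerivAt hFl hFr (Filter.eventuallyEq_of_mem hsl hEl)
      (Filter.eventuallyEq_of_mem hsr hEr)
  have hmain : ∀ x, HasDerivAt f (g x) x ∧ HasDerivAt g (g2 x) x := by
    intro x
    rcases lt_trichotomy x 0 with hx | hx | hx
    · -- interior of left tail
      have hs : Set.Iio (0:ℝ) ∈ nhds x := Iio_mem_nhds hx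
      have e1 : Set.EqOn f (fun y => L + tailF c l 0 - tailF c l (-y)) (Set.Iio 0) :=
        fun y hy => (hRA y (le_of_lt hy)).1
      have e2 : Set.EqOn g (fun y => tailD c l (-y)) (Set.Iio 0) :=
        fun y hy => (hRA y (le_of_lt hy)).2.1
      constructor
      · rw [(hRA x hx.le).2.1]; exact hcongr hs e1 (hLT1 x)
      · rw [(hRA x hx.le).2.2]; exact hcongr hs e2 (hLT2 x)
    · -- junction at 0
      subst hx
      have hsl : Set.Iic (0:ℝ) ∈ nhdsWithin 0 (Set.Iic 0) := self_mem_nhdsWithin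
      have el1 : Set.EqOn f (fun y => L + tailF c l 0 - tailF c l (-y)) (Set.Iic 0) :=
        fun y hy => (hRA y hy).1
      have el2 : Set.EqOn g (fun y => tailD c l (-y)) (Set.Iic 0) := fun y hy => (hRA y hy).2.1
      have hg0 : g 0 = -c := by rw [(hRA 0 le_rfl).2.1, neg_zero, tailD_zero]
      have hg20 : g2 0 = 0 := by rw [(hRA 0 le_rfl).2.2, neg_zero, tailD2_zero, neg_zero]
      have hdl1 : HasDerivAt (fun y => L + tailF c l 0 - tailF c l (-y)) (-c) 0 := by
        have := hLT1 0; rwa [neg_zero, tailD_zero] at this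
      have hdl2 : HasDerivAt (fun y => tailD c l (-y)) (0:ℝ) 0 := by
        have := hLT2 0; rwa [neg_zero, tailD2_zero, neg_zero] at this
      by_cases hm0 : (0:ℝ) < X c η m
      · have hm1 : 0 < m := by
          rcases Nat.eq_zero_or_pos m with h0 | h0
          · rw [h0, hX0] at hm0; exact absurd hm0 (lt_irrefl 0)
          · exact h0
        have hX1 : (0:ℝ) < X c η 1 := by rw [← hX0]; exact hXS Nat.zero_lt_one
        have hsr : Set.Ico (0:ℝ) (X c η 1) ∈ nhdsWithin 0 (Set.Ici 0) :=
          Ico_mem_nhdsGE (hX1)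
        have er1 : Set.EqOn f (toothF c (per c sh η 0) L (X c η 0)) (Set.Ico 0 (X c η 1)) :=
          fun y hy => (hRB 0 hm1 y (by rw [hX0]; exact hy.1) hy.2.le).1
        have er2 : Set.EqOn g (toothD c (per c sh η 0) (X c η 0)) (Set.Ico 0 (X c η 1)) :=
          fun y hy => (hRB 0 hm1 y (by rw [hX0]; exact hy.1) hy.2.le).2.1
        have hdr1 : HasDerivAt (toothF c (per c sh η 0) L (X c η 0)) (-c) 0 := by
          have := hTOOTH1 0 hm1 0
          rwa [show toothD c (per c sh η 0) (X c η 0) 0 = -c by rw [hX0]; exact toothD_left c _ 0] at this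
        have hdr2 : HasDerivAt (toothD c (per c sh η 0) (X c η 0)) (0:ℝ) 0 := by
          have := hTOOTH2 0 hm1 0
          rwa [show toothD2 c (per c sh η 0) (X c η 0) 0 = 0 by rw [hX0]; exact toothD2_left c _ 0] at this
        constructor
        · rw [hg0]; exact hglue hsl hsr el1 er1 hdl1 hdr1
        · rw [hg20]; exact hglue hsl hsr el2 er2 hdl2 hdr2
      · have hXm0 : X c η m = 0 := le_antisymm (not_lt.mp hm0) (hXnn m)
        have hsr : Set.Ico (0:ℝ) xe ∈ nhdsWithin 0 (Set.Ici 0) :=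
          Ico_mem_nhdsGE (by rw [← hXm0]; exact hxegt)
        have er1 : Set.EqOn f (fun y => L - c*(y - X c η m)) (Set.Ico 0 xe) :=
          fun y hy => (hRC y (by rw [hXm0]; exact hy.1) hy.2.le).1
        have er2 : Set.EqOn g (fun _ => -c) (Set.Ico 0 xe) :=
          fun y hy => (hRC y (by rw [hXm0]; exact hy.1) hy.2.le).2.1
        constructor
        · rw [hg0]; exact hglue hsl hsr el1 er1 hdl1 (hLIN1 0)
        · rw [hg20]; exact hglue hsl hsr el2 er2 hdl2 (hLIN2 0)
    · -- 0 < x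
      rcases lt_trichotomy x (X c η m) with hxm | hxm | hxm
      · -- in the teeth region
        obtain ⟨ht, hx1, hx2⟩ := hidx x hx.le hxm
        set t := idx c η m x with ht_def
        rcases eq_or_lt_of_le hx1 with heq | hlt'
        · -- junction between tooth (t-1) and tooth t ; x = X t
          have ht0 : t ≠ 0 := by
            intro h0
            rw [h0, hX0] at heq
            exact absurd heq.symm hx.ne'
          obtain ⟨s, hs⟩ : ∃ s, t = s + 1 := ⟨t - 1, by omega⟩
          have hsm' : s < m := by omega
          have hs1m : s + 1 < m := by omega
          rw [hs] at heq
          -- heq : X c η (s+1) = x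
          have hsl : Set.Ioc (X c η s) x ∈ nhdsWithin x (Set.Iic x) :=
            Ioc_mem_nhdsLE_of_mem ⟨by rw [← heq]; exact hXS (Nat.lt_succ_self s), le_rfl⟩
          have hsr : Set.Ico x (X c η (s+2)) ∈ nhdsWithin x (Set.Ici x) :=
            Ico_mem_nhdsGE (by rw [← heq]; exact hXS (Nat.lt_succ_self (s+1)))
          have el1 : Set.EqOn f (toothF c (per c sh η s) L (X c η s)) (Set.Ioc (X c η s) x) :=
            fun y hy => (hRB s hsm' y hy.1.le (by rw [← heq] at hy; exact hy.2)).1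
          have el2 : Set.EqOn g (toothD c (per c sh η s) (X c η s)) (Set.Ioc (X c η s) x) :=
            fun y hy => (hRB s hsm' y hy.1.le (by rw [← heq] at hy; exact hy.2)).2.1
          have er1 : Set.EqOn f (toothF c (per c sh η (s+1)) L (X c η (s+1))) (Set.Ico x (X c η (s+2))) :=
            fun y hy => (hRB (s+1) hs1m y (by rw [heq]; exact hy.1) hy.2.le).1
          have er2 : Set.EqOn g (toothD c (per c sh η (s+1)) (X c η (s+1))) (Set.Ico x (X c η (s+2))) :=
            fun y hy => (hRB (s+1) hs1m y (by rw [heq]; exact hy.1) hy.2.le).2.1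
          have hgx : g x = -c := by
            have := (hRB (s+1) hs1m x (le_of_eq heq) (by rw [← heq] at hx2 ⊢; exact (hXS (Nat.lt_succ_self (s+1))).le)).2.1
            rw [this, ← heq, toothD_left]
          have hg2x : g2 x = 0 := by
            have := (hRB (s+1) hs1m x (le_of_eq heq) (by rw [← heq] at hx2 ⊢; exact (hXS (Nat.lt_succ_self (s+1))).le)).2.2
            rw [this, ← heq, toothD2_left]
          have hdl1 : HasDerivAt (toothF c (per c sh η s) L (X c η s)) (-c) x := by
            have := hTOOTH1 s hsm' x
            rwa [show toothD c (per c sh η s) (X c η s) x = -c by rw [← heq]; exact (hTend s hsm').2.1] at this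
          have hdl2 : HasDerivAt (toothD c (per c sh η s) (X c η s)) (0:ℝ) x := by
            have := hTOOTH2 s hsm' x
            rwa [show toothD2 c (per c sh η s) (X c η s) x = 0 by rw [← heq]; exact (hTend s hsm').2.2] at this
          have hdr1 : HasDerivAt (toothF c (per c sh η (s+1)) L (X c η (s+1))) (-c) x := by
            have := hTOOTH1 (s+1) hs1m x
            rwa [show toothD c (per c sh η (s+1)) (X c η (s+1)) x = -c by rw [← heq, toothD_left]] at this
          have hdr2 : HasDerivAt (toothD c (per c sh η (s+1)) (X c η (s+1))) (0:ℝ) x := by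
            have := hTOOTH2 (s+1) hs1m x
            rwa [show toothD2 c (per c sh η (s+1)) (X c η (s+1)) x = 0 by rw [← heq, toothD2_left]] at this
          constructor
          · rw [hgx]; exact hglue hsl hsr el1 er1 hdl1 hdr1
          · rw [hg2x]; exact hglue hsl hsr el2 er2 hdl2 hdr2
        · -- interior of tooth t
          have hs : Set.Ioo (X c η t) (X c η (t+1)) ∈ nhds x := Ioo_mem_nhds hlt' hx2
          have e1 : Set.EqOn f (toothF c (per c sh η t) L (X c η t)) (Set.Ioo (X c η t) (X c η (t+1))) :=
            fun y hy => (hRB t ht y hy.1.le hy.2.le).1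
          have e2 : Set.EqOn g (toothD c (per c sh η t) (X c η t)) (Set.Ioo (X c η t) (X c η (t+1))) :=
            fun y hy => (hRB t ht y hy.1.le hy.2.le).2.1
          constructor
          · rw [(hRB t ht x hx1 hx2.le).2.1]; exact hcongr hs e1 (hTOOTH1 t ht x)
          · rw [(hRB t ht x hx1 hx2.le).2.2]; exact hcongr hs e2 (hTOOTH2 t ht x)
      · -- junction at X m (tooth (m-1) / linear) ; x = X m, x > 0 so m > 0
        have hm1 : 0 < m := by
          rcases Nat.eq_zero_or_pos m with h0 | h0
          · rw [h0, hX0] at hxm; exact absurd hxm hx.ne'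
          · exact h0
        obtain ⟨s, hs⟩ : ∃ s, m = s + 1 := ⟨m - 1, by omega⟩
        have hsm' : s < m := by omega
        have heq : X c η (s+1) = X c η m := by rw [← hs]
        have hsl : Set.Ioc (X c η s) x ∈ nhdsWithin x (Set.Iic x) :=
          Ioc_mem_nhdsLE_of_mem ⟨by rw [hxm, ← heq]; exact hXS (Nat.lt_succ_self s), le_rfl⟩
        have hsr : Set.Ico x xe ∈ nhdsWithin x (Set.Ici x) :=
          Ico_mem_nhdsGE (by rw [hxm]; exact hxegt)
        have el1 : Set.EqOn f (toothF c (per c sh η s) L (X c η s)) (Set.Ioc (X c η s) x) :=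
          fun y hy => (hRB s hsm' y hy.1.le (by rw [heq, ← hxm]; exact hy.2)).1
        have el2 : Set.EqOn g (toothD c (per c sh η s) (X c η s)) (Set.Ioc (X c η s) x) :=
          fun y hy => (hRB s hsm' y hy.1.le (by rw [heq, ← hxm]; exact hy.2)).2.1
        have er1 : Set.EqOn f (fun y => L - c*(y - X c η m)) (Set.Ico x xe) :=
          fun y hy => (hRC y (by rw [← hxm]; exact hy.1) hy.2.le).1
        have er2 : Set.EqOn g (fun _ => -c) (Set.Ico x xe) :=
          fun y hy => (hRC y (by rw [← hxm]; exact hy.1) hy.2.le).2.1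
        have hgx : g x = -c := (hRC x (le_of_eq hxm.symm) (by rw [hxm]; exact hxegt.le)).2.1
        have hg2x : g2 x = 0 := (hRC x (le_of_eq hxm.symm) (by rw [hxm]; exact hxegt.le)).2.2
        have hdl1 : HasDerivAt (toothF c (per c sh η s) L (X c η s)) (-c) x := by
          have := hTOOTH1 s hsm' x
          rwa [show toothD c (per c sh η s) (X c η s) x = -c by
            rw [hxm, ← heq]; exact (hTend s hsm').2.1] at this
        have hdl2 : HasDerivAt (toothD c (per c sh η s) (X c η s)) (0:ℝ) x := by
          have := hTOOTH2 s hsm' x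
          rwa [show toothD2 c (per c sh η s) (X c η s) x = 0 by
            rw [hxm, ← heq]; exact (hTend s hsm').2.2] at this
        constructor
        · rw [hgx]; exact hglue hsl hsr el1 er1 hdl1 (hLIN1 x)
        · rw [hg2x]; exact hglue hsl hsr el2 er2 hdl2 (hLIN2 x)
      · -- right of X m
        rcases lt_trichotomy x xe with hxe' | hxe' | hxe'
        · -- interior of linear piece
          have hs : Set.Ioo (X c η m) xe ∈ nhds x := Ioo_mem_nhds hxm hxe'
          have e1 : Set.EqOn f (fun y => L - c*(y - X c η m)) (Set.Ioo (X c η m) xe) :=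
            fun y hy => (hRC y hy.1.le hy.2.le).1
          have e2 : Set.EqOn g (fun _ => -c) (Set.Ioo (X c η m) xe) :=
            fun y hy => (hRC y hy.1.le hy.2.le).2.1
          constructor
          · rw [(hRC x hxm.le hxe'.le).2.1]; exact hcongr hs e1 (hLIN1 x)
          · rw [(hRC x hxm.le hxe'.le).2.2]; exact hcongr hs e2 (hLIN2 x)
        · -- junction at xe
          have hsl : Set.Ioc (X c η m) x ∈ nhdsWithin x (Set.Iic x) :=
            Ioc_mem_nhdsLE_of_mem ⟨hxm, le_rfl⟩
          have hsr : Set.Ici x ∈ nhdsWithin x (Set.Ici x) := self_mem_nhdsWithin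
          have el1 : Set.EqOn f (fun y => L - c*(y - X c η m)) (Set.Ioc (X c η m) x) :=
            fun y hy => (hRC y hy.1.le (by rw [← hxe']; exact hy.2)).1
          have el2 : Set.EqOn g (fun _ => -c) (Set.Ioc (X c η m) x) :=
            fun y hy => (hRC y hy.1.le (by rw [← hxe']; exact hy.2)).2.1
          have er1 : Set.EqOn f (fun y => tailF c l (y - xe)) (Set.Ici x) :=
            fun y hy => (hRD y (by rw [← hxe']; exact hy)).1
          have er2 : Set.EqOn g (fun y => tailD c l (y - xe)) (Set.Ici x) :=
            fun y hy => (hRD y (by rw [← hxe']; exact hy)).2.1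
          have hgx : g x = -c := by
            rw [(hRD x hxe'.ge).2.1, hxe', sub_self, tailD_zero]
          have hg2x : g2 x = 0 := by
            rw [(hRD x hxe'.ge).2.2, hxe', sub_self, tailD2_zero]
          have hRT1x := hRT1 x
          have hdr1 : HasDerivAt (fun y => tailF c l (y - xe)) (-c) x := by
            rwa [show tailD c l (x - xe) = -c by rw [hxe', sub_self, tailD_zero]] at hRT1x
          have hRT2x := hRT2 x
          have hdr2 : HasDerivAt (fun y => tailD c l (y - xe)) (0:ℝ) x := by
            rwa [show tailD2 c l (x - xe) = 0 by rw [hxe', sub_self, tailD2_zero]] at hRT2x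
          constructor
          · rw [hgx]; exact hglue hsl hsr el1 er1 (hLIN1 x) hdr1
          · rw [hg2x]; exact hglue hsl hsr el2 er2 (hLIN2 x) hdr2
        · -- interior of right tail
          have hs : Set.Ioi xe ∈ nhds x := Ioi_mem_nhds hxe'
          have e1 : Set.EqOn f (fun y => tailF c l (y - xe)) (Set.Ioi xe) :=
            fun y hy => (hRD y (le_of_lt hy)).1
          have e2 : Set.EqOn g (fun y => tailD c l (y - xe)) (Set.Ioi xe) :=
            fun y hy => (hRD y (le_of_lt hy)).2.1
          constructor
          · rw [(hRD x hxe'.le).2.1]; exact hcongr hs e1 (hRT1 x)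
          · rw [(hRD x hxe'.le).2.2]; exact hcongr hs e2 (hRT2 x)

  have hder : deriv f = g := funext fun x => (hmain x).1.deriv
  have hder2 : deriv g = g2 := funext fun x => (hmain x).2.deriv
  -- nonnegativity and smoothness
  have hfL : ∀ x, x ≤ 0 → L ≤ f x := by
    intro x hx
    rw [(hRA x hx).1]
    have h1 : tailF c l (-x) ≤ 3*c/(2*l) := tailF_le c l (-x) hc hl (by linarith)
    rw [← hV] at h1; linarith
  have hfB : ∀ t, t < m → ∀ x, X c η t ≤ x → x ≤ X c η (t+1) → Δ ≤ f x := by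
    intro t ht x h1 h2
    rw [(hRB t ht x h1 h2).1]
    have h3 := toothF_ge c (per c sh η t) L (X c η t) x hc (hper t ht).2.2.1
    have h4 : c*(per c sh η t)/(2*π) ≤ c*(c*sh)/(2*π) := by
      gcongr
      exact (hper t ht).2.1
    linarith [hLΔ.1, hdip]
  have hsm : ∀ x, |g2 x| ≤ ε * Real.sqrt K1 + 4 * π * K1 * f x := by
    intro x
    have hsqnn : 0 ≤ ε * Real.sqrt K1 := by positivity
    rcases le_or_gt x 0 with hx | hx
    · obtain ⟨e1, _, e3⟩ := hRA x hx
      rw [e3, e1, abs_neg]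
      have hb := tailD2_abs_le c l (-x) hc hl (by linarith)
      have htl := tailF_le c l (-x) hc hl (by linarith)
      rw [← hV] at htl
      have h2 : tailF c l (-x) ≤ L + tailF c l 0 - tailF c l (-x) := by
        linarith [hVΔ, hLΔ.1, hΔ]
      calc |tailD2 c l (-x)| ≤ l^2 * tailF c l (-x) := hb
        _ ≤ l^2 * (L + tailF c l 0 - tailF c l (-x)) :=
            mul_le_mul_of_nonneg_left h2 (by positivity)
        _ = 4*π*K1 * (L + tailF c l 0 - tailF c l (-x)) := by rw [hlsq]; ring
        _ ≤ ε*Real.sqrt K1 + 4*π*K1*(L + tailF c l 0 - tailF c l (-x)) := by linarith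
    · rcases lt_or_ge x (X c η m) with hxm | hxm
      · obtain ⟨ht, hx1, hx2⟩ := hidx x hx.le hxm
        have hΔf : Δ ≤ f x := hfB (idx c η m x) ht x hx1 hx2.le
        obtain ⟨e1, _, e3⟩ := hRB (idx c η m x) ht x hx1 hx2.le
        rw [e1] at hΔf
        rw [e3, e1]
        obtain ⟨hpl, hpu, hppos, _⟩ := hper (idx c η m x) ht
        have hb := toothD2_abs_le c (per c sh η (idx c η m x)) (X c η (idx c η m x)) x hc hppos
        have h1 : 2*π*c/(per c sh η (idx c η m x)) ≤ 2*π*c/(c*sh/2) := by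
          gcongr
        have h2 : 2*π*c/(c*sh/2) = 4*π*K1*Δ := by
          rw [hsh_def, hc_def]
          field_simp
          ring
        have h3 : 4*π*K1*Δ ≤ 4*π*K1*(toothF c (per c sh η (idx c η m x)) L (X c η (idx c η m x)) x) :=
          mul_le_mul_of_nonneg_left hΔf (by positivity)
        calc |toothD2 c (per c sh η (idx c η m x)) (X c η (idx c η m x)) x|
            ≤ 2*π*c/(per c sh η (idx c η m x)) := hb
          _ ≤ 4*π*K1*Δ := by rw [← h2]; exact h1
          _ ≤ ε*Real.sqrt K1 + 4*π*K1*(toothF c (per c sh η (idx c η m x)) L (X c η (idx c η m x)) x) := by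
              linarith
      · rcases lt_or_ge x xe with hxe' | hxe'
        · obtain ⟨e1, _, e3⟩ := hRC x hxm hxe'.le
          rw [e3, e1, abs_zero]
          have hxx : x - X c η m ≤ 3*Δ/c := by
            rw [hxe_def] at hxe'
            linarith
          have h5 : c * (3*Δ/c) = 3*Δ := by field_simp
          have h6 : c*(x - X c η m) ≤ 3*Δ := by
            calc c*(x - X c η m) ≤ c*(3*Δ/c) := mul_le_mul_of_nonneg_left hxx hc.le
              _ = 3*Δ := h5
          have h7 : 0 ≤ L - c*(x - X c η m) := by linarith [hLΔ.1]
          have h8 : 0 ≤ 4*π*K1*(L - c*(x - X c η m)) := mul_nonneg (by positivity) h7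
          linarith
        · obtain ⟨e1, _, e3⟩ := hRD x hxe'
          rw [e3, e1]
          have hb := tailD2_abs_le c l (x - xe) hc hl (by linarith)
          calc |tailD2 c l (x - xe)| ≤ l^2 * tailF c l (x - xe) := hb
            _ = 4*π*K1 * tailF c l (x - xe) := by rw [hlsq]; ring
            _ ≤ ε*Real.sqrt K1 + 4*π*K1*(tailF c l (x - xe)) := by linarith
  have hfnn : ∀ x, 0 < f x := by
    intro x
    rcases le_or_gt x 0 with hx | hx
    · rw [(hRA x hx).1]
      have htl := tailF_le c l (-x) hc hl (by linarith)
      rw [← hV] at htl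
      linarith [hLΔ.1]
    · rcases lt_or_ge x (X c η m) with hxm | hxm
      · obtain ⟨ht, hx1, hx2⟩ := hidx x hx.le hxm
        have := hfB (idx c η m x) ht x hx1 hx2.le
        linarith
      · rcases lt_or_ge x xe with hxe' | hxe'
        · rw [(hRC x hxm hxe'.le).1]
          have hxx : x - X c η m ≤ 3*Δ/c := by
            rw [hxe_def] at hxe'
            linarith
          have h5 : c * (3*Δ/c) = 3*Δ := by field_simp
          have h6 : c*(x - X c η m) ≤ 3*Δ := by
            calc c*(x - X c η m) ≤ c*(3*Δ/c) := mul_le_mul_of_nonneg_left hxx hc.le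
              _ = 3*Δ := h5
          rw [hL_def]
          linarith [hVpos]
        · rw [(hRD x hxe').1]
          exact tailF_pos c l (x - xe) hc hl (by linarith)
  have hglb : IsGLB (Set.range f) 0 := by
    constructor
    · rintro y ⟨x, rfl⟩
      exact (hfnn x).le
    · intro b hb
      have hble : ∀ u : ℝ, 0 ≤ u → b ≤ tailF c l u := by
        intro u hu
        have := hb (Set.mem_range_self (xe + u))
        rwa [(hRD (xe + u) (by linarith)).1, add_sub_cancel_left] at this
      exact ge_of_tendsto (tendsto_tailF c l hl)
        (Filter.eventually_atTop.mpr ⟨0, fun u hu => hble u hu⟩)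
  -- trajectory
  have hGXT : ∀ t : ℕ, (t:ℝ) < T → g (X c η t) = -c := by
    intro t ht
    rcases lt_or_ge t m with htm | htm
    · rw [(hRB t htm (X c η t) le_rfl (hXS (Nat.lt_succ_self t)).le).2.1, toothD_left]
    · have hηm : η m ≤ sh := by
        rcases hm_spec with h | h
        · exact h
        · exfalso
          have hmt : (m:ℝ) ≤ (t:ℝ) := by exact_mod_cast htm
          linarith
      have hXt : X c η t < xe := by
        have hsplit : X c η t = X c η m + c * ∑ u ∈ Finset.Ico m t, η u := by
          rw [X, X, Finset.sum_Ico_eq_sub _ htm]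
          ring
        have hsum : ∑ u ∈ Finset.Ico m t, η u ≤ ((t - m : ℕ):ℝ) * sh := by
          calc ∑ u ∈ Finset.Ico m t, η u ≤ ∑ _u ∈ Finset.Ico m t, sh := by
                apply Finset.sum_le_sum
                intro u hu
                exact le_trans (hηmono m u (Finset.mem_Ico.mp hu).1) hηm
            _ = ((t - m : ℕ):ℝ) * sh := by
                rw [Finset.sum_const, Nat.card_Ico]
                simp [nsmul_eq_mul]
        have hcard : ((t - m : ℕ) : ℝ) ≤ (t:ℝ) := by
          exact_mod_cast Nat.sub_le t m
        have h1 : c * ∑ u ∈ Finset.Ico m t, η u ≤ c * ((t:ℝ) * sh) := by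
          apply mul_le_mul_of_nonneg_left ?_ hc.le
          calc ∑ u ∈ Finset.Ico m t, η u ≤ ((t - m : ℕ):ℝ) * sh := hsum
            _ ≤ (t:ℝ)*sh := mul_le_mul_of_nonneg_right hcard hsh.le
        have h2 : c * ((t:ℝ)*sh) < c * (T*sh) :=
          mul_lt_mul_of_pos_left (mul_lt_mul_of_pos_right ht hsh) hc
        have h3 : c * (T*sh) ≤ 3*Δ/c := by
          rw [hc_def, hT_def, hsh_def]
          have heval : (2*ε) * ((K1 * Δ^2 / (4*ε^2)) * (1/(K1*Δ))) = Δ/(2*ε) := by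
            field_simp
            ring
          rw [heval, div_le_div_iff₀ (by positivity) (by positivity)]
          nlinarith
        rw [hxe_def, hsplit]
        linarith
      exact (hRC (X c η t) (hXS.monotone htm) hXt.le).2.1
  have hf0 : f 0 = L := by
    have := (hRA 0 le_rfl).1
    rw [this]; simp
  refine ⟨f, 0, 0, ⟨fun x => (hmain x).1.differentiableAt, ?_⟩, ?_, ?_, ?_, ?_⟩
  · rw [hder]; exact fun x => (hmain x).2.differentiableAt
  · exact hglb
  · intro x; rw [hder, hder2, sub_zero]; exact hsm x
  · rw [sub_zero, hf0]; linarith [hLΔ.2]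
  · intro w hw0 hwrec t ht
    have hW : ∀ s : ℕ, (s:ℝ) < T → w s = X c η s := by
      intro s
      induction s with
      | zero => intro _; rw [hw0, hX0]
      | succ s ih =>
        intro hs
        have hs' : (s:ℝ) < T := by
          have : (s:ℝ) < ((s+1 : ℕ):ℝ) := by push_cast; linarith
          linarith
        rw [hwrec s, ih hs', hder, hGXT s hs', hXsucc]
        ring
    rw [hW t ht, hder, hGXT t ht, abs_neg, abs_of_pos hc]
    rw [hc_def]; linarith

end
end

section
/- Let Δ > 0, K₁ > 0, let η > 2/(K₁Δ), and let G ∈ ℝ with G > 2πΔ + Δ/2. Define α = ηK₁Δ/(2π) (so α > 1/π), b = 2π/(η√K₁·Δ) = √K₁/α, a = Δ·α·√(1 + α²), d = a + G − (α/(α + √(1 + α²)))·Δ, and for a given point x₀ ∈ ℝ set c = arctan(−ηK₁Δ/(2π)) − b·x₀. Then the function f(x) = a·sin(bx + c) + d satisfies: f(x) > 2πΔ for all x ∈ ℝ; |f''(x)| ≤ 2πK₁Δ ≤ K₁·f(x) for all x ∈ ℝ; and f(x₀) = G. -/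
open Real

noncomputable section

set_option maxHeartbeats 1000000 in
/-- Trigonometric building block of the lower-bound construction.
With `α = ηK₁Δ/(2π)` (so `α > 1/π`), `b = 2π/(η√K₁ Δ) = √K₁/α`, `a = Δα√(1+α²)`,
`d = a + G − (α/(α+√(1+α²)))Δ` and `c = arctan(−ηK₁Δ/(2π)) − b x₀`, the function
`f(x) = a sin(bx + c) + d` satisfies `f(x) > 2πΔ`, `|f''(x)| ≤ 2πK₁Δ ≤ K₁ f(x)` for all
`x`, and `f(x₀) = G`. -/
theorem statement13 (Δ K1 η G x0 : ℝ) (hΔ : 0 < Δ) (hK1 : 0 < K1)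
    (hη : 2 / (K1 * Δ) < η) (hG : 2 * π * Δ + Δ / 2 < G)
    (α b a d c : ℝ)
    (hα : α = η * K1 * Δ / (2 * π))
    (hb : b = 2 * π / (η * Real.sqrt K1 * Δ))
    (ha : a = Δ * α * Real.sqrt (1 + α ^ 2))
    (hd : d = a + G - (α / (α + Real.sqrt (1 + α ^ 2))) * Δ)
    (hc : c = Real.arctan (-(η * K1 * Δ) / (2 * π)) - b * x0)
    (f : ℝ → ℝ) (hf : ∀ x, f x = a * Real.sin (b * x + c) + d) :
    (1 / π < α) ∧ (b = Real.sqrt K1 / α) ∧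
    (∀ x : ℝ, 2 * π * Δ < f x) ∧
    (∀ x : ℝ, |deriv (deriv f) x| ≤ 2 * π * K1 * Δ ∧ 2 * π * K1 * Δ ≤ K1 * f x) ∧
    f x0 = G := by
  have hπ := Real.pi_pos
  have hKΔ : 0 < K1 * Δ := mul_pos hK1 hΔ
  have h2 : 2 < η * (K1 * Δ) := (div_lt_iff₀ hKΔ).mp hη
  have hηpos : 0 < η := by nlinarith
  have hα1 : 1 / π < α := by
    rw [hα, div_lt_div_iff₀ hπ (by positivity)]
    nlinarith
  have hαpos : 0 < α := lt_trans (by positivity) hα1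
  have hπα : 1 < α * π := (div_lt_iff₀ hπ).mp hα1
  have hsK : Real.sqrt K1 * Real.sqrt K1 = K1 := Real.mul_self_sqrt hK1.le
  have hsKpos : 0 < Real.sqrt K1 := Real.sqrt_pos.mpr hK1
  have hb2 : b = Real.sqrt K1 / α := by
    rw [hb, hα]
    rw [div_eq_div_iff (by positivity) (by positivity)]
    field_simp
    nlinarith [hsK]
  set s := Real.sqrt (1 + α ^ 2) with hsdef
  have hs2 : s ^ 2 = 1 + α ^ 2 := Real.sq_sqrt (by positivity)
  have hspos : 0 < s := Real.sqrt_pos.mpr (by positivity)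
  have hsα : α < s := by nlinarith
  have hapos : 0 < a := by rw [ha]; exact mul_pos (mul_pos hΔ hαpos) hspos
  have hαsne : α + s ≠ 0 := by positivity
  have hfrac : α / (α + s) < 1 / 2 := by
    rw [div_lt_iff₀ (by positivity)]
    linarith
  -- lower bound on f
  have hlow : ∀ x : ℝ, 2 * π * Δ < f x := by
    intro x
    rw [hf x]
    have h1 : -a ≤ a * Real.sin (b * x + c) := by
      nlinarith [Real.neg_one_le_sin (b * x + c), hapos]
    have h2' : (α / (α + s)) * Δ < 1 / 2 * Δ := mul_lt_mul_of_pos_right hfrac hΔ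
    linarith [hd]
  -- derivatives
  have hfe : f = fun x => a * Real.sin (b * x + c) + d := funext hf
  have harg : ∀ x : ℝ, HasDerivAt (fun y : ℝ => b * y + c) b x := by
    intro x
    simpa using ((hasDerivAt_id x).const_mul b).add_const c
  have hD1 : deriv f = fun x => a * b * Real.cos (b * x + c) := by
    funext x
    rw [hfe]
    have h1 : HasDerivAt (fun y : ℝ => a * Real.sin (b * y + c) + d)
        (a * (Real.cos (b * x + c) * b)) x := (((harg x).sin).const_mul a).add_const d
    rw [h1.deriv]; ring
  have hD2 : ∀ x : ℝ, deriv (deriv f) x = -(a * b ^ 2 * Real.sin (b * x + c)) := by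
    intro x
    rw [hD1]
    have h1 : HasDerivAt (fun y : ℝ => a * b * Real.cos (b * y + c))
        (a * b * (-Real.sin (b * x + c) * b)) x := (((harg x).cos).const_mul (a * b))
    rw [h1.deriv]; ring
  -- bound on a b^2
  have hbpos : 0 < b := by rw [hb2]; positivity
  have hab2 : a * b ^ 2 = Δ * K1 * s / α := by
    have hK : (Real.sqrt K1 / α) ^ 2 = K1 / α ^ 2 := by
      rw [div_pow, sq, hsK]
    rw [ha, hb2, hK]
    field_simp
  have e1 : 1 < α ^ 2 * π ^ 2 := by nlinarith [hπα, mul_pos hαpos hπ]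
  have e2 : 9 * α ^ 2 ≤ α ^ 2 * π ^ 2 := by
    have h9 : (0:ℝ) ≤ π ^ 2 - 9 := by nlinarith [Real.pi_gt_three]
    nlinarith [mul_nonneg (sq_nonneg α) h9]
  have h4 : 1 + α ^ 2 ≤ (2 * π * α) ^ 2 := by nlinarith [e1, e2]
  have hsle : s ≤ 2 * π * α := by
    have h5 := Real.sqrt_le_sqrt h4
    rwa [Real.sqrt_sq (by positivity)] at h5
  have hbound : a * b ^ 2 ≤ 2 * π * K1 * Δ := by
    rw [hab2, div_le_iff₀ hαpos]
    nlinarith [mul_le_mul_of_nonneg_left hsle (mul_pos hΔ hK1).le]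
  -- value at x0
  have hαc : -(η * K1 * Δ) / (2 * π) = -α := by rw [hα]; ring
  have hx0 : b * x0 + c = Real.arctan (-α) := by rw [hc, hαc]; ring
  have hfx0 : f x0 = G := by
    rw [hf x0, hx0, Real.sin_arctan]
    have hsq : (1 + (-α) ^ 2) = 1 + α ^ 2 := by ring
    rw [hsq, ← hsdef, hd, ha]
    field_simp
    nlinarith [hs2, hspos, hαpos, hΔ]
  refine ⟨hα1, hb2, hlow, fun x => ⟨?_, ?_⟩, hfx0⟩
  · rw [hD2 x, abs_neg, abs_mul]
    have habs : |Real.sin (b * x + c)| ≤ 1 :=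
      abs_le.mpr ⟨Real.neg_one_le_sin _, Real.sin_le_one _⟩
    have hab2pos : (0:ℝ) < a * b ^ 2 := by positivity
    rw [abs_of_pos hab2pos]
    calc a * b ^ 2 * |Real.sin (b * x + c)| ≤ a * b ^ 2 * 1 := by
          exact mul_le_mul_of_nonneg_left habs hab2pos.le
      _ = a * b ^ 2 := by ring
      _ ≤ 2 * π * K1 * Δ := hbound
  · have := hlow x
    nlinarith [hK1]
end
end

section
/- Let Δ > 0, K₁ > 0, ε > 0 and η > 0 satisfy 5ε/(4√K₁) ≤ Δ/2, η·K₁·Δ > 6 and 2εη√K₁·Δ ≤ Δ. Let x₁ < x₀ be real numbers with x₀ − x₁ = η√K₁·Δ. Define A = 2ε(x₀ − x₁), B = √K₁·Δ·(x₀ − x₁), C = 0, D = K₁Δ(x₀ − x₁)², a = (2A − 2B + C + D)/4, b = (−3A + 3B − 2C − D)/3, c = C/2, d = A, e = D/12 − B/2 + 7Δ + 5ε/(4√K₁), and set ḡ(z) = az⁴ + bz³ + cz² + dz + e and g(y) = ḡ((y − x₁)/(x₀ − x₁)) for y ∈ [x₁, x₀]. Then: g(x₁) = e; g(x₀) = A/2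 + 7Δ + 5ε/(4√K₁); g(y) ≥ Δ for all y ∈ [x₁, x₀]; and |g''(y)| ≤ K₁Δ for all y ∈ [x₁, x₀]. -/
open Real

noncomputable section

set_option maxHeartbeats 400000

lemma stmt14_aux (A B D Δ z : ℝ) (hApos : 0 < A) (hAΔ : A ≤ Δ) (hBpos : 0 < B)
    (hD6B : 6 * B < D) (hBD : B ^ 2 = D * Δ) (hΔ : 0 < Δ)
    (hz0 : 0 ≤ z) (hz1 : z ≤ 1) :
    Δ ≤ (2 * A - 2 * B + D) / 4 * z ^ 4 + (-3 * A + 3 * B - D) / 3 * z ^ 3 + A * z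
        + (D / 12 - B / 2 + 7 * Δ) := by
  have hu : 0 < D - 2 * B := by linarith
  have step1 : 0 ≤ 6 * A * z ^ 4 - 12 * A * z ^ 3 + 12 * A * z := by
    nlinarith [mul_nonneg (mul_nonneg hApos.le hz0) (sq_nonneg z),
      mul_nonneg (mul_nonneg hApos.le hz0) (mul_nonneg (sub_nonneg.mpr hz1) (by linarith : (0:ℝ) ≤ 1 + z))]
  have key1 : 0 ≤ 3 * (D - 2*B)^4 * z^4 - 4 * (D - 2*B)^3 * (D - 3*B) * z^3 + (D - 3*B)^4 := by
    have h := mul_nonneg (sq_nonneg ((D - 2*B) * z - (D - 3*B)))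
      (by nlinarith [sq_nonneg ((D - 2*B) * z + (D - 3*B)), sq_nonneg ((D - 2*B) * z)] :
        (0:ℝ) ≤ 3 * ((D - 2*B) * z)^2 + 2 * ((D - 2*B) * z) * (D - 3*B) + (D - 3*B)^2)
    nlinarith [h]
  have hpoly : 0 ≤ 54*(D - 6*B)^3 + 640*B*(D - 6*B)^2 + 2535*B^2*(D - 6*B) + 3354*B^3 := by
    have h1 : 0 ≤ D - 6*B := by linarith
    positivity
  have key2 : (D - 3*B)^4 ≤ (D - 2*B)^3 * (D - 6*B + 60*Δ) := by
    have hid : (D - 2*B)^3 * (D - 6*B + 60*Δ) - (D - 3*B)^4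
        = Δ * (54*(D - 6*B)^3 + 640*B*(D - 6*B)^2 + 2535*B^2*(D - 6*B) + 3354*B^3)
          + (D*Δ - B^2) * (6*D^2 - 28*D*B + 33*B^2) := by ring
    have hz : D*Δ - B^2 = 0 := by linarith [hBD]
    nlinarith [mul_nonneg hΔ.le hpoly]
  have hS : 0 ≤ 3 * (D - 2*B) * z^4 - 4 * (D - 3*B) * z^3 + (D - 6*B) + 60*Δ := by
    nlinarith [key1, key2, pow_pos hu 3]
  nlinarith [step1, hS, hΔ]

lemma stmt14_aux2 (A B D z : ℝ) (hApos : 0 < A) (hAB : A < B)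
    (hD6B : 6 * B < D) (hz0 : 0 ≤ z) (hz1 : z ≤ 1) :
    |(6*A - 6*B + 3*D) * z^2 + (-6*A + 6*B - 2*D) * z| ≤ D := by
  have hs : 0 < 6*(B - A) := by linarith
  have hsD : 6*(B - A) < D := by linarith
  rw [abs_le]
  constructor
  · have halpha : (0:ℝ) < 6*A - 6*B + 3*D := by linarith
    have h4 : 0 ≤ (6*A - 6*B + 3*D) * (((6*A - 6*B + 3*D)*z^2 + (-6*A + 6*B - 2*D)*z) + D) := by
      nlinarith [sq_nonneg (2*(6*A - 6*B + 3*D)*z - (6*A - 6*B + 2*D)),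
        mul_pos (show (0:ℝ) < D - 6*(B-A) by linarith) (show (0:ℝ) < D + 6*(B-A) by linarith),
        sq_nonneg D]
    nlinarith [h4, halpha]
  · nlinarith [mul_nonneg (mul_nonneg (by linarith : (0:ℝ) ≤ 6*B - 6*A + 2*D) hz0) (sub_nonneg.mpr hz1),
      mul_nonneg (mul_nonneg (by linarith : (0:ℝ) ≤ D) (sub_nonneg.mpr hz1)) (by linarith : (0:ℝ) ≤ 1 + z)]


/-- Quartic linking piece of the lower-bound construction.
Under the stated parameter conditions, the quartic `g(y) = ḡ((y − x₁)/(x₀ − x₁))` with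
`ḡ(z) = az⁴ + bz³ + cz² + dz + e` satisfies `g(x₁) = e`,
`g(x₀) = A/2 + 7Δ + 5ε/(4√K₁)`, `g(y) ≥ Δ` and `|g''(y)| ≤ K₁Δ` on `[x₁, x₀]`. -/
theorem statement14 (Δ K1 ε η : ℝ) (hΔ : 0 < Δ) (hK1 : 0 < K1) (hε : 0 < ε) (hη : 0 < η)
    (hcond1 : 5 * ε / (4 * Real.sqrt K1) ≤ Δ / 2)
    (hcond2 : 6 < η * K1 * Δ)
    (hcond3 : 2 * ε * η * Real.sqrt K1 * Δ ≤ Δ)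
    (x1 x0 : ℝ) (hx : x1 < x0) (hgap : x0 - x1 = η * Real.sqrt K1 * Δ)
    (A B C D a b c d e : ℝ)
    (hA : A = 2 * ε * (x0 - x1))
    (hB : B = Real.sqrt K1 * Δ * (x0 - x1))
    (hC : C = 0)
    (hD : D = K1 * Δ * (x0 - x1) ^ 2)
    (ha : a = (2 * A - 2 * B + C + D) / 4)
    (hb : b = (-3 * A + 3 * B - 2 * C - D) / 3)
    (hc : c = C / 2)
    (hd : d = A)
    (he : e = D / 12 - B / 2 + 7 * Δ + 5 * ε / (4 * Real.sqrt K1))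
    (gbar g : ℝ → ℝ)
    (hgbar : ∀ z, gbar z = a * z ^ 4 + b * z ^ 3 + c * z ^ 2 + d * z + e)
    (hg : ∀ y, g y = gbar ((y - x1) / (x0 - x1))) :
    g x1 = e ∧
    g x0 = A / 2 + 7 * Δ + 5 * ε / (4 * Real.sqrt K1) ∧
    (∀ y ∈ Set.Icc x1 x0, Δ ≤ g y) ∧
    (∀ y ∈ Set.Icc x1 x0, |deriv (deriv g) y| ≤ K1 * Δ) := by

  subst hC
  have hL : (0:ℝ) < x0 - x1 := sub_pos.mpr hx
  have hsK : 0 < Real.sqrt K1 := Real.sqrt_pos.mpr hK1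
  have hsq : Real.sqrt K1 ^ 2 = K1 := Real.sq_sqrt hK1.le
  have hApos : 0 < A := by rw [hA]; positivity
  have hBpos : 0 < B := by rw [hB]; positivity
  have hDB : D = B * (η * K1 * Δ) := by rw [hD, hB, hgap]; ring
  have hD6B : 6 * B < D := by
    rw [hDB]; nlinarith [hBpos, hcond2]
  have hBD : B ^ 2 = D * Δ := by
    rw [hB, hD]; linear_combination (Δ^2 * (x0 - x1)^2) * hsq
  have hAΔ : A ≤ Δ := by
    rw [hA, hgap]; nlinarith [hcond3]
  have hB6Δ : 6 * Δ < B := by nlinarith [hBD, hD6B, hBpos, hΔ]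
  have hAB : A < B := by linarith
  have hterm : 0 ≤ 5 * ε / (4 * Real.sqrt K1) := by positivity
  -- part 1
  have part1 : g x1 = e := by
    rw [hg, hgbar]; simp
  -- part 2
  have part2 : g x0 = A / 2 + 7 * Δ + 5 * ε / (4 * Real.sqrt K1) := by
    rw [hg, show (x0 - x1) / (x0 - x1) = 1 from div_self hL.ne', hgbar]
    rw [ha, hb, hc, hd, he]; ring
  -- derivative setup
  have hgfun : g = fun y => a * ((y - x1) / (x0 - x1)) ^ 4 + b * ((y - x1) / (x0 - x1)) ^ 3
      + c * ((y - x1) / (x0 - x1)) ^ 2 + d * ((y - x1) / (x0 - x1)) + e :=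
    funext fun y => by rw [hg y, hgbar]
  have hu : ∀ y : ℝ, HasDerivAt (fun t : ℝ => (t - x1) / (x0 - x1)) (1 / (x0 - x1)) y := by
    intro y
    simpa using ((hasDerivAt_id y).sub_const x1).div_const (x0 - x1)
  have hder1 : ∀ y : ℝ, HasDerivAt g
      ((4 * a * ((y - x1) / (x0 - x1)) ^ 3 + 3 * b * ((y - x1) / (x0 - x1)) ^ 2
        + 2 * c * ((y - x1) / (x0 - x1)) + d) / (x0 - x1)) y := by
    intro y
    rw [hgfun]
    have h4 := (((hu y).pow 4).const_mul a)
    have h3 := (((hu y).pow 3).const_mul b)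
    have h2 := (((hu y).pow 2).const_mul c)
    have h1 := ((hu y).const_mul d)
    have := (((h4.add h3).add h2).add h1).add_const e
    refine this.congr_deriv ?_
    push_cast
    ring
  have hderivg : deriv g = fun y => (4 * a * ((y - x1) / (x0 - x1)) ^ 3
      + 3 * b * ((y - x1) / (x0 - x1)) ^ 2 + 2 * c * ((y - x1) / (x0 - x1)) + d) / (x0 - x1) :=
    funext fun y => (hder1 y).deriv
  have hder2 : ∀ y : ℝ, HasDerivAt (fun y => (4 * a * ((y - x1) / (x0 - x1)) ^ 3
      + 3 * b * ((y - x1) / (x0 - x1)) ^ 2 + 2 * c * ((y - x1) / (x0 - x1)) + d) / (x0 - x1))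
      ((12 * a * ((y - x1) / (x0 - x1)) ^ 2 + 6 * b * ((y - x1) / (x0 - x1)) + 2 * c)
        / (x0 - x1) ^ 2) y := by
    intro y
    have h3 := (((hu y).pow 3).const_mul (4 * a))
    have h2 := (((hu y).pow 2).const_mul (3 * b))
    have h1 := ((hu y).const_mul (2 * c))
    have := (((h3.add h2).add h1).add_const d).div_const (x0 - x1)
    refine this.congr_deriv ?_
    push_cast
    field_simp
    ring
  have hderiv2 : ∀ y : ℝ, deriv (deriv g) y
      = (12 * a * ((y - x1) / (x0 - x1)) ^ 2 + 6 * b * ((y - x1) / (x0 - x1)) + 2 * c)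
        / (x0 - x1) ^ 2 := by
    intro y
    rw [hderivg]
    exact (hder2 y).deriv
  refine ⟨part1, part2, ?_, ?_⟩
  · -- part 3
    intro y hy
    obtain ⟨hy1, hy2⟩ := hy
    rw [hg, hgbar]
    set z := (y - x1) / (x0 - x1) with hzdef
    have hz0 : 0 ≤ z := div_nonneg (by linarith) hL.le
    have hz1 : z ≤ 1 := (div_le_one hL).mpr (by linarith)
    have hmain := stmt14_aux A B D Δ z hApos hAΔ hBpos hD6B hBD hΔ hz0 hz1
    rw [ha, hb, hc, hd, he]
    linarith [hmain, hterm]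
  · -- part 4
    intro y hy
    obtain ⟨hy1, hy2⟩ := hy
    rw [hderiv2]
    set z := (y - x1) / (x0 - x1) with hzdef
    have hz0 : 0 ≤ z := div_nonneg (by linarith) hL.le
    have hz1 : z ≤ 1 := (div_le_one hL).mpr (by linarith)
    have hq := stmt14_aux2 A B D z hApos hAB hD6B hz0 hz1
    have hL2 : (0:ℝ) < (x0 - x1) ^ 2 := by positivity
    have habs : |12 * a * z ^ 2 + 6 * b * z + 2 * c| ≤ D := by
      have heq : 12 * a * z ^ 2 + 6 * b * z + 2 * c
          = (6*A - 6*B + 3*D) * z^2 + (-6*A + 6*B - 2*D) * z := by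
        rw [ha, hb, hc]; ring
      rw [heq]; exact hq
    rw [abs_div, abs_of_pos hL2, div_le_iff₀ hL2, ← hD]
    exact habs
end
end

section
/- Define f : ℝ² → ℝ by f(w) = (1/2)(log 2 + log(1 + exp(w₁³w₂)) − w₁³w₂ + w₁² + w₂²). Then: (i) for every ρ with 0 ≤ ρ < 2 and all constants L₀, L_ρ ≥ 0, f is not (ρ, L₀, L_ρ)-smooth, i.e. there exists w ∈ ℝ² with ‖∇²f(w)‖ > L₀ + L_ρ‖∇f(w)‖^ρ; (ii) f is bounded below with f* = inf f > −∞, and for every ρ ≥ 3 there exist K₀, K_ρ > 0 such that f is (ρ, K₀, K_ρ)-smooth, i.e. ‖∇²f(w)‖ ≤ K₀ + K_ρ(f(w) − f*)^ρ for all w ∈ ℝ². -/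
open Real

noncomputable section

namespace S16
abbrev E2 := EuclideanSpace ℝ (Fin 2)
def X : E2 →L[ℝ] ℝ := EuclideanSpace.proj 0
def Y : E2 →L[ℝ] ℝ := EuclideanSpace.proj 1
def e0 : E2 := EuclideanSpace.single 0 1
def e1 : E2 := EuclideanSpace.single 1 1
def s (u : ℝ) : ℝ := (1 + exp u)⁻¹
def t (u : ℝ) : ℝ := exp u * ((1 + exp u)⁻¹) ^ 2
def p (w : E2) : ℝ := (w 0) ^ 3 * w 1
def Dp (w : E2) : E2 →L[ℝ] ℝ := (3 * (w 0) ^ 2 * w 1) • X + (w 0) ^ 3 • Y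

lemma one_add_exp_pos (u : ℝ) : (0:ℝ) < 1 + exp u := by positivity
lemma one_add_exp_ne (u : ℝ) : (1 + exp u) ≠ 0 := (one_add_exp_pos u).ne'

lemma hasDerivAt_s (u : ℝ) : HasDerivAt s (-(t u)) u := by
  have h : HasDerivAt (fun u => 1 + exp u) (exp u) u := (Real.hasDerivAt_exp u).const_add 1
  have h2 := h.inv (one_add_exp_ne u)
  refine h2.congr_deriv ?_
  rw [t]
  field_simp

lemma hX (w : E2) : HasFDerivAt (fun w : E2 => w 0) (X : E2 →L[ℝ] ℝ) w := X.hasFDerivAt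
lemma hY (w : E2) : HasFDerivAt (fun w : E2 => w 1) (Y : E2 →L[ℝ] ℝ) w := Y.hasFDerivAt

lemma hp (w : E2) : HasFDerivAt p (Dp w) w := by
  have h := (((hX w).mul (hX w)).mul (hX w)).mul (hY w)
  have e : p = fun w : E2 => w 0 * w 0 * w 0 * w 1 := by
    funext v; rw [p]; ring
  rw [e]
  refine h.congr_fderiv ?_
  ext v
  simp [Dp, X, Y]
  ring

def S (w : E2) : ℝ := s (p w)

lemma hS (w : E2) : HasFDerivAt S ((-(t (p w))) • Dp w) w :=
  (hasDerivAt_s (p w)).comp_hasFDerivAt w (hp w)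

def a (w : E2) : ℝ := w 0 - 3/2 * (w 0)^2 * w 1 * S w
def b (w : E2) : ℝ := w 1 - 1/2 * (w 0)^3 * S w
def g (w : E2) : E2 := a w • e0 + b w • e1
def h00 (w : E2) : ℝ := 1 - 3 * w 0 * w 1 * S w + 9/2 * (w 0)^4 * (w 1)^2 * t (p w)
def h01 (w : E2) : ℝ := -(3/2) * (w 0)^2 * S w + 3/2 * (w 0)^5 * w 1 * t (p w)
def h11 (w : E2) : ℝ := 1 + 1/2 * (w 0)^6 * t (p w)
def Da (w : E2) : E2 →L[ℝ] ℝ := h00 w • X + h01 w • Y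
def Db (w : E2) : E2 →L[ℝ] ℝ := h01 w • X + h11 w • Y

lemma ha (w : E2) : HasFDerivAt a (Da w) w := by
  have e : a = fun w : E2 => w 0 - 3/2 * (w 0 * w 0) * w 1 * S w := by
    funext v; rw [a]; ring
  have e2 : (fun w : E2 => w 0 - 3/2 * (w 0 * w 0) * w 1 * S w)
      = fun w : E2 => w 0 - (3/2 * (w 0 * w 0 * w 1)) * S w := by
    funext v; ring
  rw [e, e2]
  refine ((hX w).sub (((((hX w).mul (hX w)).mul (hY w)).const_mul (3/2)).mul (hS w))).congr_fderiv ?_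
  ext v
  simp [Da, h00, h01, X, Y, S, Dp]
  ring

lemma hb (w : E2) : HasFDerivAt b (Db w) w := by
  have e : b = fun w : E2 => w 1 - (1/2 * (w 0 * w 0 * w 0)) * S w := by
    funext v; rw [b]; ring
  rw [e]
  refine ((hY w).sub (((((hX w).mul (hX w)).mul (hX w)).const_mul (1/2)).mul (hS w))).congr_fderiv ?_
  ext v
  simp [Db, h01, h11, X, Y, S, Dp]
  ring
end S16
namespace S16
def myf (w : E2) : ℝ :=
  (1 / 2) * (Real.log 2 + Real.log (1 + Real.exp ((w 0) ^ 3 * w 1)) -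
    (w 0) ^ 3 * w 1 + (w 0) ^ 2 + (w 1) ^ 2)

def Df (w : E2) : E2 →L[ℝ] ℝ := a w • X + b w • Y

lemma hasDerivAt_logexp (u : ℝ) :
    HasDerivAt (fun u : ℝ => Real.log (1 + Real.exp u)) (1 - s u) u := by
  have h : HasDerivAt (fun u => 1 + exp u) (exp u) u := (Real.hasDerivAt_exp u).const_add 1
  have h2 := (Real.hasDerivAt_log (one_add_exp_ne u)).comp u h
  refine h2.congr_deriv ?_
  rw [s]
  field_simp
  ring

lemma hmyf (w : E2) : HasFDerivAt myf (Df w) w := by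
  have hx2 : HasFDerivAt (fun w : E2 => w 0 * w 0) ((2 * w 0) • X) w := by
    refine ((hX w).mul (hX w)).congr_fderiv ?_
    ext v; simp [X]; ring
  have hy2 : HasFDerivAt (fun w : E2 => w 1 * w 1) ((2 * w 1) • Y) w := by
    refine ((hY w).mul (hY w)).congr_fderiv ?_
    ext v; simp [Y]; ring
  have hlog : HasFDerivAt (fun w : E2 => Real.log (1 + Real.exp (p w)))
      ((1 - s (p w)) • Dp w) w :=
    (hasDerivAt_logexp (p w)).comp_hasFDerivAt w (hp w)
  have e : myf = fun w : E2 => (1/2) * (Real.log 2 + Real.log (1 + Real.exp (p w))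
      - p w + w 0 * w 0 + w 1 * w 1) := by
    funext v; rw [myf, p]; ring
  rw [e]
  refine (((((hlog.const_add (Real.log 2)).sub (hp w)).add hx2).add hy2).const_mul (1/2)).congr_fderiv ?_
  ext v
  simp [Df, a, b, X, Y, S, Dp]
  ring

lemma hgrad (w : E2) : HasGradientAt myf (g w) w := by
  rw [hasGradientAt_iff_hasFDerivAt]
  refine (hmyf w).congr_fderiv ?_
  ext v
  simp [Df, g, e0, e1, X, Y, PiLp.inner_apply, RCLike.inner_apply, conj_trivial,
    EuclideanSpace.single_apply, Fin.sum_univ_two]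

lemma gradient_myf : gradient myf = g := gradient_eq (fun w => hgrad w)

def Hm (w : E2) : E2 →L[ℝ] E2 := (Da w).smulRight e0 + (Db w).smulRight e1

lemma hg (w : E2) : HasFDerivAt g (Hm w) w := by
  have h := ((ha w).smul_const e0).add ((hb w).smul_const e1)
  have e : g = fun w : E2 => a w • e0 + b w • e1 := rfl
  rw [e]
  exact h

lemma fderiv_g (w : E2) : fderiv ℝ g w = Hm w := (hg w).fderiv
end S16
namespace S16
lemma coord_le (v : E2) (i : Fin 2) : |v i| ≤ ‖v‖ := by
  rw [EuclideanSpace.norm_eq]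
  calc |v i| = Real.sqrt (‖v i‖^2) := by
        rw [Real.sqrt_sq_eq_abs, Real.norm_eq_abs, abs_abs]
  _ ≤ Real.sqrt (∑ j, ‖v j‖^2) :=
      Real.sqrt_le_sqrt (Finset.single_le_sum (f := fun j => ‖v j‖^2)
        (fun _ _ => sq_nonneg _) (Finset.mem_univ i))

lemma norm_X_le : ‖X‖ ≤ 1 :=
  X.opNorm_le_bound zero_le_one (fun v => by
    rw [one_mul]; simpa [X, Real.norm_eq_abs] using coord_le v 0)

lemma norm_Y_le : ‖Y‖ ≤ 1 :=
  Y.opNorm_le_bound zero_le_one (fun v => by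
    rw [one_mul]; simpa [Y, Real.norm_eq_abs] using coord_le v 1)

lemma norm_e0 : ‖e0‖ = 1 := by simp [e0, EuclideanSpace.norm_single]
lemma norm_e1 : ‖e1‖ = 1 := by simp [e1, EuclideanSpace.norm_single]

lemma norm_lin_le (α β : ℝ) : ‖α • X + β • Y‖ ≤ |α| + |β| := by
  refine ContinuousLinearMap.opNorm_le_bound _ (by positivity) (fun v => ?_)
  have : (α • X + β • Y) v = α * v 0 + β * v 1 := by
    simp [X, Y]
  rw [this, Real.norm_eq_abs]
  calc |α * v 0 + β * v 1| ≤ |α * v 0| + |β * v 1| := abs_add_le _ _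
  _ = |α| * |v 0| + |β| * |v 1| := by rw [abs_mul, abs_mul]
  _ ≤ |α| * ‖v‖ + |β| * ‖v‖ := by
      gcongr
      · exact coord_le v 0
      · exact coord_le v 1
  _ = (|α| + |β|) * ‖v‖ := by ring

lemma norm_Hm_le (w : E2) : ‖Hm w‖ ≤ (|h00 w| + |h01 w|) + (|h01 w| + |h11 w|) := by
  refine le_trans (norm_add_le _ _) ?_
  rw [ContinuousLinearMap.norm_smulRight_apply, ContinuousLinearMap.norm_smulRight_apply,
    norm_e0, norm_e1, mul_one, mul_one]
  exact add_le_add (norm_lin_le _ _) (norm_lin_le _ _)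

lemma norm_g_le (w : E2) : ‖g w‖ ≤ |a w| + |b w| := by
  rw [g]
  refine le_trans (norm_add_le _ _) ?_
  rw [norm_smul, norm_smul, norm_e0, norm_e1, mul_one, mul_one, Real.norm_eq_abs, Real.norm_eq_abs]

lemma h11_le_norm_Hm (w : E2) : |h11 w| ≤ ‖Hm w‖ := by
  have he : Hm w e1 = (h01 w) • e0 + (h11 w) • e1 := by
    simp [Hm, Da, Db, e0, e1, X, Y, EuclideanSpace.single_apply]
  have hinner : (inner ℝ e1 (Hm w e1) : ℝ) = h11 w := by
    rw [he]
    simp [e0, e1, PiLp.inner_apply, RCLike.inner_apply, conj_trivial,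
      EuclideanSpace.single_apply, Fin.sum_univ_two]
  calc |h11 w| = |(inner ℝ e1 (Hm w e1) : ℝ)| := by rw [hinner]
  _ ≤ ‖e1‖ * ‖Hm w e1‖ := abs_real_inner_le_norm _ _
  _ = ‖Hm w e1‖ := by rw [norm_e1, one_mul]
  _ ≤ ‖Hm w‖ * ‖e1‖ := (Hm w).le_opNorm e1
  _ = ‖Hm w‖ := by rw [norm_e1, mul_one]
end S16
namespace S16
lemma s_nonneg (u : ℝ) : 0 ≤ s u := by rw [s]; positivity
lemma s_le_one (u : ℝ) : s u ≤ 1 := by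
  rw [s]
  rw [inv_le_one_iff₀]
  right
  nlinarith [exp_pos u]
lemma t_nonneg (u : ℝ) : 0 ≤ t u := by rw [t]; positivity
lemma t_le_quarter (u : ℝ) : t u ≤ 1/4 := by
  rw [t, inv_pow]
  rw [mul_inv_le_iff₀ (by positivity)]
  nlinarith [exp_pos u, sq_nonneg (1 - exp u)]
lemma s_zero : s 0 = 1/2 := by rw [s]; norm_num [Real.exp_zero]
lemma t_zero : t 0 = 1/4 := by rw [t]; norm_num [Real.exp_zero]

lemma logexp_sub_nonneg (u : ℝ) : 0 ≤ Real.log (1 + Real.exp u) - u := by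
  have h : u ≤ Real.log (1 + Real.exp u) := by
    calc u = Real.log (Real.exp u) := (Real.log_exp u).symm
    _ ≤ Real.log (1 + Real.exp u) :=
        Real.log_le_log (exp_pos u) (by linarith [exp_pos u])
  linarith

lemma myf_lower (w : E2) : (1/2) * (Real.log 2 + (w 0)^2 + (w 1)^2) ≤ myf w := by
  rw [myf]
  have := logexp_sub_nonneg ((w 0)^3 * w 1)
  nlinarith
end S16
namespace S16
lemma bnd_mul {A M u c : ℝ} (h1 : -M ≤ A) (h2 : A ≤ M) (hu0 : 0 ≤ u) (huc : u ≤ c) :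
    -(M*c) ≤ A*u ∧ A*u ≤ M*c := by
  have hM : 0 ≤ M := by linarith
  have hc : 0 ≤ c := le_trans hu0 huc
  constructor
  · nlinarith [mul_nonneg hu0 (by linarith : (0:ℝ) ≤ M + A),
      mul_nonneg (by linarith : (0:ℝ) ≤ c - u) hM]
  · nlinarith [mul_nonneg hu0 (by linarith : (0:ℝ) ≤ M - A),
      mul_nonneg (by linarith : (0:ℝ) ≤ c - u) hM]

lemma pf2 (x y : ℝ) : x^4*y^2 ≤ (x^2+y^2)^3 := by
  nlinarith [sq_nonneg (x^3), sq_nonneg (x^2*y), sq_nonneg (x*y^2), sq_nonneg (y^3)]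
lemma pf3a (x y : ℝ) : -((x^2+y^2)^3/2) ≤ x^5*y := by
  nlinarith [sq_nonneg (x^2*(x+y)), sq_nonneg (x^2*y), sq_nonneg (x*y^2), sq_nonneg (y^3), sq_nonneg (x^3)]
lemma pf3b (x y : ℝ) : x^5*y ≤ (x^2+y^2)^3/2 := by
  nlinarith [sq_nonneg (x^2*(x-y)), sq_nonneg (x^2*y), sq_nonneg (x*y^2), sq_nonneg (y^3), sq_nonneg (x^3)]
lemma pf4 (x y : ℝ) : x^6 ≤ (x^2+y^2)^3 := by
  nlinarith [sq_nonneg (x^2*y), sq_nonneg (x*y^2), sq_nonneg (y^3)]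

set_option maxHeartbeats 1000000 in
lemma Hm_poly (w : E2) :
    ‖Hm w‖ ≤ 2 + 5*((w 0)^2+(w 1)^2) + 2*((w 0)^2+(w 1)^2)^3 := by
  refine (norm_Hm_le w).trans ?_
  obtain ⟨x, hx⟩ : ∃ x, w 0 = x := ⟨_, rfl⟩
  obtain ⟨y, hy⟩ : ∃ y, w 1 = y := ⟨_, rfl⟩
  rw [hx, hy]
  obtain ⟨u, hu⟩ : ∃ u, p w = u := ⟨_, rfl⟩
  have hr0 : (0:ℝ) ≤ x^2 + y^2 := by positivity
  have hs0 := s_nonneg u; have hs1 := s_le_one u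
  have ht0 := t_nonneg u; have ht1 := t_le_quarter u
  have pf1a : -((x^2+y^2)/2) ≤ x*y := by nlinarith [sq_nonneg (x+y)]
  have pf1b : x*y ≤ (x^2+y^2)/2 := by nlinarith [sq_nonneg (x-y)]
  have pf2' : (0:ℝ) ≤ x^4*y^2 := by positivity
  have pf4' : (0:ℝ) ≤ x^6 := by positivity
  have pf5 : x^2 ≤ x^2+y^2 := by nlinarith [sq_nonneg y]
  have B1 := bnd_mul pf1a pf1b hs0 hs1
  have B2 := bnd_mul (by nlinarith [pf2 x y] : -((x^2+y^2)^3) ≤ x^4*y^2) (pf2 x y) ht0 ht1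
  have B3 := bnd_mul (pf3a x y) (pf3b x y) ht0 ht1
  have B4 := bnd_mul (by nlinarith [pf4 x y] : -((x^2+y^2)^3) ≤ x^6) (pf4 x y) ht0 ht1
  have B5 := bnd_mul (by nlinarith : -(x^2+y^2) ≤ x^2) pf5 hs0 hs1
  have e00 : h00 w = 1 - 3*(x*y*S w) + 9/2*(x^4*y^2*t u) := by rw [h00, hx, hy, hu]; ring
  have e01 : h01 w = -(3/2)*(x^2*S w) + 3/2*(x^5*y*t u) := by rw [h01, hx, hy, hu]; ring
  have e11 : h11 w = 1 + 1/2*(x^6*t u) := by rw [h11, hx, hu]; ring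
  have hSs : S w = s u := by rw [S, hu]
  rw [hSs] at e00 e01
  have a00 : |h00 w| ≤ 1 + 3/2*(x^2+y^2) + 9/8*(x^2+y^2)^3 := by
    rw [e00, abs_le]; constructor <;> nlinarith [B1.1, B1.2, B2.1, B2.2]
  have a01 : |h01 w| ≤ 3/2*(x^2+y^2) + 3/16*(x^2+y^2)^3 := by
    rw [e01, abs_le]; constructor <;> nlinarith [B3.1, B3.2, B5.1, B5.2]
  have a11 : |h11 w| ≤ 1 + 1/8*(x^2+y^2)^3 := by
    rw [e11, abs_le]; constructor <;> nlinarith [B4.1, B4.2]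
  nlinarith [a00, a01, a11]
end S16
namespace S16
lemma wc0 (c : ℝ) : (c • e0) 0 = c := by
  simp [e0, EuclideanSpace.single_apply]
lemma wc1 (c : ℝ) : (c • e0) 1 = 0 := by
  simp [e0, EuclideanSpace.single_apply]

lemma p_wc (c : ℝ) : p (c • e0) = 0 := by rw [p, wc0, wc1]; ring
lemma a_wc (c : ℝ) : a (c • e0) = c := by rw [a, S, p_wc, wc0, wc1]; ring
lemma b_wc (c : ℝ) : b (c • e0) = -(c^3/4) := by
  rw [b, S, p_wc, s_zero, wc0, wc1]; ring
lemma h11_wc (c : ℝ) : h11 (c • e0) = 1 + c^6/8 := by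
  rw [h11, p_wc, t_zero, wc0]; ring

lemma partI (ρ L0 Lρ : ℝ) (hρ0 : 0 ≤ ρ) (hρ2 : ρ < 2) (hL0 : 0 ≤ L0) (hLρ : 0 ≤ Lρ) :
    ∃ w : E2, L0 + Lρ * ‖g w‖ ^ ρ < ‖Hm w‖ := by
  set A := L0 + 4*Lρ with hA
  have hA0 : 0 ≤ A := by positivity
  have hexp : (0:ℝ) < 6 - 3*ρ := by linarith
  set c := max 1 ((8*A+1) ^ ((6-3*ρ)⁻¹)) with hc
  have hc1 : (1:ℝ) ≤ c := le_max_left _ _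
  have hc0 : (0:ℝ) < c := lt_of_lt_of_le one_pos hc1
  refine ⟨c • e0, ?_⟩
  -- key exponent inequality
  have hkey : (8*A+1) ≤ c ^ (6-3*ρ) := by
    have h1 : ((8*A+1) ^ ((6-3*ρ)⁻¹)) ^ (6-3*ρ) = 8*A+1 :=
      Real.rpow_inv_rpow (by positivity) hexp.ne'
    calc (8*A+1) = ((8*A+1) ^ ((6-3*ρ)⁻¹)) ^ (6-3*ρ) := h1.symm
    _ ≤ c ^ (6-3*ρ) :=
        Real.rpow_le_rpow (by positivity) (le_max_right _ _) hexp.le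
  -- norm of gradient
  have hgle : ‖g (c • e0)‖ ≤ 2*c^3 := by
    refine (norm_g_le _).trans ?_
    rw [a_wc, b_wc]
    rw [abs_of_nonneg hc0.le, abs_neg, abs_of_nonneg (by positivity : (0:ℝ) ≤ c^3/4)]
    nlinarith [pow_le_pow_right₀ hc1 (by norm_num : 1 ≤ 3)]
  -- bound on rpow of gradient norm
  have hP0 : (0:ℝ) < c ^ (3*ρ) := Real.rpow_pos_of_pos hc0 _
  have hgrpow : ‖g (c • e0)‖ ^ ρ ≤ 4 * c ^ (3*ρ) := by
    calc ‖g (c • e0)‖ ^ ρ ≤ (2*c^3) ^ ρ :=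
        Real.rpow_le_rpow (norm_nonneg _) hgle hρ0
    _ = 2 ^ ρ * (c^3) ^ ρ := Real.mul_rpow (by norm_num) (by positivity)
    _ ≤ 4 * c ^ (3*ρ) := by
        have h2 : (2:ℝ) ^ ρ ≤ 4 := by
          calc (2:ℝ) ^ ρ ≤ 2 ^ (2:ℝ) := Real.rpow_le_rpow_of_exponent_le one_le_two hρ2.le
          _ = 4 := by
              rw [show (2:ℝ) = ((2:ℕ):ℝ) from rfl, Real.rpow_natCast]; norm_num
        have h3 : (c^3 : ℝ) ^ ρ = c ^ (3*ρ) := by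
          rw [← Real.rpow_natCast c 3, ← Real.rpow_mul hc0.le]
          norm_num
        rw [h3]
        have := Real.rpow_nonneg hc0.le (3*ρ)
        nlinarith
  -- c^6 split
  have hc6 : (c:ℝ)^6 = c ^ (3*ρ) * c ^ (6-3*ρ) := by
    rw [← Real.rpow_add hc0]
    rw [show 3*ρ + (6-3*ρ) = ((6:ℕ):ℝ) by push_cast; ring, Real.rpow_natCast]
  have hone : (1:ℝ) ≤ c ^ (3*ρ) := by
    calc (1:ℝ) = c ^ (0:ℝ) := (Real.rpow_zero c).symm
    _ ≤ c ^ (3*ρ) := Real.rpow_le_rpow_of_exponent_le hc1 (by positivity)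
  -- main chain
  have hmain : L0 + Lρ * ‖g (c • e0)‖ ^ ρ < 1 + c^6/8 := by
    have h1 : L0 + Lρ * ‖g (c • e0)‖ ^ ρ ≤ A * c ^ (3*ρ) := by
      have : Lρ * ‖g (c • e0)‖ ^ ρ ≤ Lρ * (4 * c ^ (3*ρ)) := by
        exact mul_le_mul_of_nonneg_left hgrpow hLρ
      nlinarith
    have h2 : A * c ^ (3*ρ) < c^6/8 := by
      have := mul_le_mul_of_nonneg_left hkey hP0.le
      rw [hc6]
      nlinarith
    have h3 : (0:ℝ) < 1 := one_pos
    calc L0 + Lρ * ‖g (c • e0)‖ ^ ρ ≤ A * c ^ (3*ρ) := h1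
    _ < c^6/8 := h2
    _ < 1 + c^6/8 := by linarith
  calc L0 + Lρ * ‖g (c • e0)‖ ^ ρ < 1 + c^6/8 := hmain
  _ = |h11 (c • e0)| := by
      rw [h11_wc, abs_of_nonneg]; positivity
  _ ≤ ‖Hm (c • e0)‖ := h11_le_norm_Hm _
end S16
namespace S16
def fstar : ℝ := sInf (Set.range myf)

lemma bdd : BddBelow (Set.range myf) := by
  refine ⟨1/2 * Real.log 2, fun v hv => ?_⟩
  obtain ⟨w, rfl⟩ := hv
  have := myf_lower w
  nlinarith [sq_nonneg (w 0), sq_nonneg (w 1)]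

lemma hglb : IsGLB (Set.range myf) fstar :=
  Real.isGLB_sInf ⟨myf 0, Set.mem_range_self 0⟩ bdd

lemma myf_zero : myf 0 = Real.log 2 := by
  have h0 : (0 : E2) 0 = 0 := rfl
  have h1 : (0 : E2) 1 = 0 := rfl
  rw [myf, h0, h1]
  norm_num [Real.exp_zero]
  ring

lemma fstar_le : fstar ≤ Real.log 2 := by
  rw [← myf_zero]
  exact hglb.1 (Set.mem_range_self 0)

lemma fstar_le_myf (w : E2) : fstar ≤ myf w := hglb.1 (Set.mem_range_self w)

lemma log_two_le_one : Real.log 2 ≤ 1 := by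
  have := Real.log_le_sub_one_of_pos (by norm_num : (0:ℝ) < 2)
  linarith

lemma partII (ρ : ℝ) (hρ : 3 ≤ ρ) (w : E2) :
    ‖Hm w‖ ≤ 150 + 448 * (myf w - fstar) ^ ρ := by
  have hD0 : 0 ≤ myf w - fstar := by linarith [fstar_le_myf w]
  have hr0 : (0:ℝ) ≤ (w 0)^2 + (w 1)^2 := by positivity
  have hpoly := Hm_poly w
  rcases le_or_gt ((w 0)^2 + (w 1)^2) 4 with hr | hr
  · have h1 : ‖Hm w‖ ≤ 150 := by nlinarith [sq_nonneg ((w 0)^2 + (w 1)^2 - 4)]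
    have h2 : 0 ≤ (myf w - fstar) ^ ρ := Real.rpow_nonneg hD0 _
    linarith
  · have hD : ((w 0)^2 + (w 1)^2)/4 ≤ myf w - fstar := by
      have h1 := myf_lower w
      have h2 := fstar_le
      have h3 := log_two_le_one
      nlinarith
    have hD1 : (1:ℝ) ≤ myf w - fstar := by linarith
    have hcube : ((w 0)^2 + (w 1)^2)^3/64 ≤ (myf w - fstar)^(3:ℕ) := by
      calc ((w 0)^2 + (w 1)^2)^3/64 = (((w 0)^2 + (w 1)^2)/4)^3 := by ring
      _ ≤ (myf w - fstar)^(3:ℕ) := by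
          exact pow_le_pow_left₀ (by linarith) hD 3
    have hrpow : (myf w - fstar)^(3:ℕ) ≤ (myf w - fstar) ^ ρ := by
      calc ((myf w - fstar):ℝ)^(3:ℕ) = (myf w - fstar) ^ ((3:ℕ):ℝ) :=
          (Real.rpow_natCast _ 3).symm
      _ ≤ (myf w - fstar) ^ ρ := by
          exact Real.rpow_le_rpow_of_exponent_le hD1 (by exact_mod_cast hρ)
    have hrr : (w 0^2 + w 1^2) ≤ ((w 0)^2 + (w 1)^2)^3 := by nlinarith [mul_pos (by linarith : (0:ℝ) < w 0 ^ 2 + w 1 ^ 2 - 4) (by linarith : (0:ℝ) < w 0 ^ 2 + w 1 ^ 2)]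
    linarith
end S16

/-- Recurrent network example. The loss
`f(w) = ½(log 2 + log(1 + exp(w₁³w₂)) − w₁³w₂ + w₁² + w₂²)` on `ℝ²` is not
`(ρ, L₀, L_ρ)`-smooth for any `0 ≤ ρ < 2`, but is bounded below and
`(ρ, K₀, K_ρ)`-smooth for every `ρ ≥ 3` with some `K₀, K_ρ > 0`. -/
theorem statement16
    (f : EuclideanSpace ℝ (Fin 2) → ℝ)
    (hfdef : ∀ w : EuclideanSpace ℝ (Fin 2),
      f w = (1 / 2) * (Real.log 2 + Real.log (1 + Real.exp ((w 0) ^ 3 * w 1)) -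
        (w 0) ^ 3 * w 1 + (w 0) ^ 2 + (w 1) ^ 2)) :
    (∀ ρ : ℝ, 0 ≤ ρ → ρ < 2 → ∀ L0 Lρ : ℝ, 0 ≤ L0 → 0 ≤ Lρ →
      ∃ w : EuclideanSpace ℝ (Fin 2),
        L0 + Lρ * ‖gradient f w‖ ^ ρ < ‖fderiv ℝ (gradient f) w‖) ∧
    (∃ fstar : ℝ, IsGLB (Set.range f) fstar ∧
      ∀ ρ : ℝ, 3 ≤ ρ → ∃ K0 Kρ : ℝ, 0 < K0 ∧ 0 < Kρ ∧
        ∀ w : EuclideanSpace ℝ (Fin 2),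
          ‖fderiv ℝ (gradient f) w‖ ≤ K0 + Kρ * (f w - fstar) ^ ρ) := by
  have hf : f = S16.myf := funext fun w => by rw [hfdef w, S16.myf]
  subst hf
  rw [S16.gradient_myf]
  constructor
  · intro ρ hρ0 hρ2 L0 Lρ hL0 hLρ
    obtain ⟨w, hw⟩ := S16.partI ρ L0 Lρ hρ0 hρ2 hL0 hLρ
    exact ⟨w, by rwa [S16.fderiv_g]⟩
  · refine ⟨S16.fstar, S16.hglb, fun ρ hρ => ⟨150, 448, by norm_num, by norm_num, fun w => ?_⟩⟩
    rw [S16.fderiv_g]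
    exact S16.partII ρ hρ w
end
end

section
/- Fix K₁ > 0 and define h : ℝ → ℝ by h(x) = e^{−√K₁·x − 1} − 1/2 for x < −1/√K₁, h(x) = (K₁/2)x² for −1/√K₁ ≤ x ≤ 1/√K₁, and h(x) = e^{√K₁·x − 1} − 1/2 for x > 1/√K₁, and define f : ℝ² → ℝ by f(x, y) = h(x) + (K₁/2)y². Then f is twice continuously differentiable, f(x, y) ≥ 0 for all (x, y) with inf f = f* = 0, and ‖∇²f(x, y)‖ = max{|h''(x)|, K₁} ≤ K₁ + K₁·f(x, y) for all (x, y) ∈ ℝ²; i.e. f is (1, K₁, K₁)-smooth. -/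
open Real Set Filter
noncomputable section
namespace S17

noncomputable def h1 (K1 : ℝ) (x : ℝ) : ℝ :=
  if x < -(1 / Real.sqrt K1) then -Real.sqrt K1 * Real.exp (-Real.sqrt K1 * x - 1)
  else if x ≤ 1 / Real.sqrt K1 then K1 * x
  else Real.sqrt K1 * Real.exp (Real.sqrt K1 * x - 1)

noncomputable def h2 (K1 : ℝ) (x : ℝ) : ℝ :=
  if x < -(1 / Real.sqrt K1) then K1 * Real.exp (-Real.sqrt K1 * x - 1)
  else if x ≤ 1 / Real.sqrt K1 then K1
  else K1 * Real.exp (Real.sqrt K1 * x - 1)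

lemma glue_hasDerivAt {f F G : ℝ → ℝ} {c d : ℝ}
    (hF : HasDerivAt F d c) (hG : HasDerivAt G d c)
    (hFf : f =ᶠ[nhdsWithin c (Iic c)] F) (hGf : f =ᶠ[nhdsWithin c (Ici c)] G)
    (hfc : f c = F c) (hgc : f c = G c) : HasDerivAt f d c := by
  have hA : HasDerivWithinAt f d (Iic c) c :=
    hF.hasDerivWithinAt.congr_of_eventuallyEq hFf hfc
  have hB : HasDerivWithinAt f d (Ici c) c :=
    hG.hasDerivWithinAt.congr_of_eventuallyEq hGf hgc
  have hU := hA.union hB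
  rw [Set.Iic_union_Ici] at hU
  exact hasDerivWithinAt_univ.1 hU

lemma expL_deriv (s x : ℝ) :
    HasDerivAt (fun y => Real.exp (-s * y - 1) - 1 / 2) (-s * Real.exp (-s * x - 1)) x := by
  have h0 : HasDerivAt (fun y : ℝ => -s * y - 1) (-s) x := by
    simpa using ((hasDerivAt_id x).const_mul (-s)).sub_const 1
  have := h0.exp.sub_const (1 / 2)
  exact this.congr_deriv (by ring)

lemma expR_deriv (s x : ℝ) :
    HasDerivAt (fun y => Real.exp (s * y - 1) - 1 / 2) (s * Real.exp (s * x - 1)) x := by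
  have h0 : HasDerivAt (fun y : ℝ => s * y - 1) s x := by
    simpa using ((hasDerivAt_id x).const_mul s).sub_const 1
  have := h0.exp.sub_const (1 / 2)
  exact this.congr_deriv (by ring)

lemma quad_deriv (K1 x : ℝ) :
    HasDerivAt (fun y => K1 / 2 * y ^ 2) (K1 * x) x := by
  have := (hasDerivAt_pow 2 x).const_mul (K1 / 2)
  exact this.congr_deriv (by rw [show (2:ℕ) - 1 = 1 from rfl]; push_cast; ring)

lemma expL2_deriv (s x : ℝ) :
    HasDerivAt (fun y => -s * Real.exp (-s * y - 1)) (s * s * Real.exp (-s * x - 1)) x := by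
  have h0 : HasDerivAt (fun y : ℝ => -s * y - 1) (-s) x := by
    simpa using ((hasDerivAt_id x).const_mul (-s)).sub_const 1
  have := h0.exp.const_mul (-s)
  exact this.congr_deriv (by ring)

lemma expR2_deriv (s x : ℝ) :
    HasDerivAt (fun y => s * Real.exp (s * y - 1)) (s * s * Real.exp (s * x - 1)) x := by
  have h0 : HasDerivAt (fun y : ℝ => s * y - 1) s x := by
    simpa using ((hasDerivAt_id x).const_mul s).sub_const 1
  have := h0.exp.const_mul s
  exact this.congr_deriv (by ring)

lemma lin_deriv (K1 x : ℝ) : HasDerivAt (fun y => K1 * y) K1 x := by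
  simpa using (hasDerivAt_id x).const_mul K1

lemma hasDerivAt_h {K1 : ℝ} (hK1 : 0 < K1) {h : ℝ → ℝ}
    (hh : ∀ x : ℝ, h x =
      if x < -(1 / Real.sqrt K1) then Real.exp (-Real.sqrt K1 * x - 1) - 1 / 2
      else if x ≤ 1 / Real.sqrt K1 then K1 / 2 * x ^ 2
      else Real.exp (Real.sqrt K1 * x - 1) - 1 / 2) (x : ℝ) :
    HasDerivAt h (h1 K1 x) x := by
  have hs : 0 < Real.sqrt K1 := Real.sqrt_pos.2 hK1
  set s := Real.sqrt K1 with hsdef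
  have hss : s * s = K1 := Real.mul_self_sqrt hK1.le
  set a := 1 / s with hadef
  have ha : 0 < a := by positivity
  have hsa : s * a = 1 := by rw [hadef]; field_simp
  rcases lt_trichotomy x (-a) with hx | hx | hx
  · have heq : ∀ᶠ y in nhds x, h y = Real.exp (-s * y - 1) - 1 / 2 := by
      filter_upwards [Iio_mem_nhds hx] with y hy
      rw [hh y, if_pos (show y < -a from hy)]
    have := (expL_deriv s x).congr_of_eventuallyEq heq
    rw [h1, if_pos hx]
    exact this
  · subst hx
    have hval : h (-a) = 1 / 2 := by
      rw [hh (-a), if_neg (lt_irrefl _), if_pos (by linarith)]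
      calc K1 / 2 * (-a) ^ 2 = (s * a) * (s * a) / 2 := by rw [← hss]; ring
        _ = 1 / 2 := by rw [hsa]; norm_num
    have hexp0 : -s * (-a) - 1 = 0 := by rw [neg_mul_neg, hsa]; ring
    have hd : h1 K1 (-a) = -s := by
      rw [h1, if_neg (lt_irrefl _), if_pos (by linarith)]
      calc K1 * (-a) = -(s * (s * a)) := by rw [← hss]; ring
        _ = -s := by rw [hsa]; ring
    rw [hd]
    have hF : HasDerivAt (fun y => Real.exp (-s * y - 1) - 1 / 2) (-s) (-a) := by
      have := expL_deriv s (-a)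
      rwa [hexp0, Real.exp_zero, mul_one] at this
    have hG : HasDerivAt (fun y => K1 / 2 * y ^ 2) (-s) (-a) := by
      have := quad_deriv K1 (-a)
      rwa [show K1 * (-a) = -s from by
        calc K1 * (-a) = -(s * (s * a)) := by rw [← hss]; ring
          _ = -s := by rw [hsa]; ring] at this
    refine glue_hasDerivAt hF hG ?_ ?_ ?_ ?_
    · filter_upwards [eventually_mem_nhdsWithin] with y (hy : y ≤ -a)
      rcases lt_or_eq_of_le hy with hy' | hy'
      · rw [hh y, if_pos hy']
      · subst hy'
        rw [hval, hexp0, Real.exp_zero]; norm_num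
    · have hlt : ∀ᶠ y in nhdsWithin (-a) (Ici (-a)), y < a :=
        Filter.Eventually.filter_mono nhdsWithin_le_nhds (eventually_lt_nhds (show (-a:ℝ) < a by linarith))
      filter_upwards [eventually_mem_nhdsWithin, hlt] with y (hy : -a ≤ y) hy'
      rw [hh y, if_neg (not_lt.2 hy), if_pos hy'.le]
    · rw [hval, hexp0, Real.exp_zero]; norm_num
    · rw [hval]
      calc (1 : ℝ) / 2 = (s * a) * (s * a) / 2 := by rw [hsa]; norm_num
        _ = K1 / 2 * (-a) ^ 2 := by rw [← hss]; ring
  · rcases lt_trichotomy x a with hx2 | hx2 | hx2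
    · have heq : ∀ᶠ y in nhds x, h y = K1 / 2 * y ^ 2 := by
        filter_upwards [Ioo_mem_nhds hx hx2] with y hy
        have h1 : -a < y := hy.1
        have h2 : y < a := hy.2
        rw [hh y, if_neg (not_lt.2 h1.le), if_pos h2.le]
      have := (quad_deriv K1 x).congr_of_eventuallyEq heq
      rw [h1, if_neg (not_lt.2 (by linarith)), if_pos hx2.le]
      exact this
    · subst hx2
      have hexp0 : s * a - 1 = 0 := by rw [hsa]; ring
      have hval : h a = 1 / 2 := by
        rw [hh a, if_neg (not_lt.2 (by linarith)), if_pos le_rfl]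
        calc K1 / 2 * a ^ 2 = (s * a) * (s * a) / 2 := by rw [← hss]; ring
          _ = 1 / 2 := by rw [hsa]; norm_num
      have hd : h1 K1 a = s := by
        rw [h1, if_neg (not_lt.2 (by linarith)), if_pos le_rfl]
        calc K1 * a = s * (s * a) := by rw [← hss]; ring
          _ = s := by rw [hsa]; ring
      rw [hd]
      have hF : HasDerivAt (fun y => K1 / 2 * y ^ 2) s a := by
        have := quad_deriv K1 a
        rwa [show K1 * a = s from by
          calc K1 * a = s * (s * a) := by rw [← hss]; ring
            _ = s := by rw [hsa]; ring] at this
      have hG : HasDerivAt (fun y => Real.exp (s * y - 1) - 1 / 2) s a := by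
        have := expR_deriv s a
        rwa [hexp0, Real.exp_zero, mul_one] at this
      refine glue_hasDerivAt hF hG ?_ ?_ ?_ ?_
      · have hlt : ∀ᶠ y in nhdsWithin a (Iic a), -a < y :=
          Filter.Eventually.filter_mono nhdsWithin_le_nhds (eventually_gt_nhds (show (-a:ℝ) < a by linarith))
        filter_upwards [eventually_mem_nhdsWithin, hlt] with y (hy : y ≤ a) hy'
        rw [hh y, if_neg (not_lt.2 hy'.le), if_pos hy]
      · filter_upwards [eventually_mem_nhdsWithin] with y (hy : a ≤ y)
        rcases lt_or_eq_of_le hy with hy' | hy'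
        · rw [hh y, if_neg (not_lt.2 (by linarith)), if_neg (not_le.2 hy')]
        · rw [← hy', hval, hexp0, Real.exp_zero]; norm_num
      · rw [hval]
        calc (1 : ℝ) / 2 = (s * a) * (s * a) / 2 := by rw [hsa]; norm_num
          _ = K1 / 2 * a ^ 2 := by rw [← hss]; ring
      · rw [hval, hexp0, Real.exp_zero]; norm_num
    · have heq : ∀ᶠ y in nhds x, h y = Real.exp (s * y - 1) - 1 / 2 := by
        filter_upwards [Ioi_mem_nhds hx2] with y hy
        have hy' : a < y := hy
        rw [hh y, if_neg (not_lt.2 (by linarith)), if_neg (not_le.2 hy')]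
      have := (expR_deriv s x).congr_of_eventuallyEq heq
      rw [h1, if_neg (not_lt.2 (by linarith)), if_neg (not_le.2 hx2)]
      exact this

end S17

namespace S17
open Real Set Filter

lemma hasDerivAt_h1 {K1 : ℝ} (hK1 : 0 < K1) (x : ℝ) :
    HasDerivAt (h1 K1) (h2 K1 x) x := by
  have hs : 0 < Real.sqrt K1 := Real.sqrt_pos.2 hK1
  set s := Real.sqrt K1 with hsdef
  have hss : s * s = K1 := Real.mul_self_sqrt hK1.le
  set a := 1 / s with hadef
  have ha : 0 < a := by positivity
  have hsa : s * a = 1 := by rw [hadef]; field_simp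
  rcases lt_trichotomy x (-a) with hx | hx | hx
  · have heq : ∀ᶠ y in nhds x, h1 K1 y = -s * Real.exp (-s * y - 1) := by
      filter_upwards [Iio_mem_nhds hx] with y hy
      rw [h1, if_pos (show y < -a from hy)]
    have h' := (expL2_deriv s x).congr_of_eventuallyEq heq
    rw [show s * s * Real.exp (-s * x - 1) = K1 * Real.exp (-s * x - 1) from by rw [hss]] at h'
    rw [h2, if_pos hx]
    exact h'
  · subst hx
    have hexp0 : -s * (-a) - 1 = 0 := by rw [neg_mul_neg, hsa]; ring
    have hval : h1 K1 (-a) = -s := by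
      rw [h1, if_neg (lt_irrefl _), if_pos (by linarith)]
      calc K1 * (-a) = -(s * (s * a)) := by rw [← hss]; ring
        _ = -s := by rw [hsa]; ring
    have hd : h2 K1 (-a) = K1 := by
      rw [h2, if_neg (lt_irrefl _), if_pos (by linarith)]
    rw [hd]
    have hF : HasDerivAt (fun y => -s * Real.exp (-s * y - 1)) K1 (-a) := by
      have := expL2_deriv s (-a)
      rwa [hexp0, Real.exp_zero, mul_one, hss] at this
    have hG : HasDerivAt (fun y => K1 * y) K1 (-a) := lin_deriv K1 (-a)
    refine glue_hasDerivAt hF hG ?_ ?_ ?_ ?_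
    · filter_upwards [eventually_mem_nhdsWithin] with y (hy : y ≤ -a)
      rcases lt_or_eq_of_le hy with hy' | hy'
      · rw [h1, if_pos hy']
      · subst hy'
        rw [hval, hexp0, Real.exp_zero, mul_one]
    · have hlt : ∀ᶠ y in nhdsWithin (-a) (Ici (-a)), y < a :=
        Filter.Eventually.filter_mono nhdsWithin_le_nhds
          (eventually_lt_nhds (show (-a:ℝ) < a by linarith))
      filter_upwards [eventually_mem_nhdsWithin, hlt] with y (hy : -a ≤ y) hy'
      rw [h1, if_neg (not_lt.2 hy), if_pos hy'.le]
    · rw [hval, hexp0, Real.exp_zero, mul_one]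
    · rw [hval]
      calc -s = -(s * (s * a)) := by rw [hsa]; ring
        _ = K1 * (-a) := by rw [← hss]; ring
  · rcases lt_trichotomy x a with hx2 | hx2 | hx2
    · have heq : ∀ᶠ y in nhds x, h1 K1 y = K1 * y := by
        filter_upwards [Ioo_mem_nhds hx hx2] with y hy
        have hy1 : -a < y := hy.1
        have hy2 : y < a := hy.2
        rw [h1, if_neg (not_lt.2 hy1.le), if_pos hy2.le]
      have h' := (lin_deriv K1 x).congr_of_eventuallyEq heq
      rw [h2, if_neg (not_lt.2 (by linarith)), if_pos hx2.le]
      exact h'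
    · subst hx2
      have hexp0 : s * a - 1 = 0 := by rw [hsa]; ring
      have hval : h1 K1 a = s := by
        rw [h1, if_neg (not_lt.2 (by linarith)), if_pos le_rfl]
        calc K1 * a = s * (s * a) := by rw [← hss]; ring
          _ = s := by rw [hsa]; ring
      have hd : h2 K1 a = K1 := by
        rw [h2, if_neg (not_lt.2 (by linarith)), if_pos le_rfl]
      rw [hd]
      have hF : HasDerivAt (fun y => K1 * y) K1 a := lin_deriv K1 a
      have hG : HasDerivAt (fun y => s * Real.exp (s * y - 1)) K1 a := by
        have := expR2_deriv s a
        rwa [hexp0, Real.exp_zero, mul_one, hss] at this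
      refine glue_hasDerivAt hF hG ?_ ?_ ?_ ?_
      · have hlt : ∀ᶠ y in nhdsWithin a (Iic a), -a < y :=
          Filter.Eventually.filter_mono nhdsWithin_le_nhds
            (eventually_gt_nhds (show (-a:ℝ) < a by linarith))
        filter_upwards [eventually_mem_nhdsWithin, hlt] with y (hy : y ≤ a) hy'
        rw [h1, if_neg (not_lt.2 hy'.le), if_pos hy]
      · filter_upwards [eventually_mem_nhdsWithin] with y (hy : a ≤ y)
        rcases lt_or_eq_of_le hy with hy' | hy'
        · rw [h1, if_neg (not_lt.2 (by linarith)), if_neg (not_le.2 hy')]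
        · rw [← hy', hval, hexp0, Real.exp_zero, mul_one]
      · rw [hval]
        calc s = s * (s * a) := by rw [hsa]; ring
          _ = K1 * a := by rw [← hss]; ring
      · rw [hval, hexp0, Real.exp_zero, mul_one]
    · have heq : ∀ᶠ y in nhds x, h1 K1 y = s * Real.exp (s * y - 1) := by
        filter_upwards [Ioi_mem_nhds hx2] with y hy
        have hy' : a < y := hy
        rw [h1, if_neg (not_lt.2 (by linarith)), if_neg (not_le.2 hy')]
      have h' := (expR2_deriv s x).congr_of_eventuallyEq heq
      rw [show s * s * Real.exp (s * x - 1) = K1 * Real.exp (s * x - 1) from by rw [hss]] at h'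
      rw [h2, if_neg (not_lt.2 (by linarith)), if_neg (not_le.2 hx2)]
      exact h'

lemma h2_eq_max {K1 : ℝ} (hK1 : 0 < K1) :
    h2 K1 = fun x => max (K1 * Real.exp (Real.sqrt K1 * |x| - 1)) K1 := by
  have hs : 0 < Real.sqrt K1 := Real.sqrt_pos.2 hK1
  set s := Real.sqrt K1 with hsdef
  have hss : s * s = K1 := Real.mul_self_sqrt hK1.le
  set a := 1 / s with hadef
  have ha : 0 < a := by positivity
  have hsa : s * a = 1 := by rw [hadef]; field_simp
  funext x
  rw [h2]
  split_ifs with hx hx2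
  · have hx0 : x < 0 := by linarith
    rw [abs_of_neg hx0]
    have h1 : (1:ℝ) ≤ Real.exp (s * -x - 1) := by
      rw [Real.one_le_exp_iff]
      nlinarith
    rw [max_eq_left (by nlinarith)]
    rw [← hsdef]
    ring_nf
  · have hx1 : -a ≤ x := not_lt.1 hx
    have habs : |x| ≤ a := abs_le.2 ⟨by linarith, hx2⟩
    have hexp : Real.exp (s * |x| - 1) ≤ 1 := by
      rw [Real.exp_le_one_iff]
      nlinarith
    rw [max_eq_right (by nlinarith)]
  · have hx2' : a < x := not_le.1 hx2
    rw [abs_of_pos (by linarith)]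
    have h1 : (1:ℝ) ≤ Real.exp (s * x - 1) := by
      rw [Real.one_le_exp_iff]
      nlinarith
    rw [max_eq_left (by nlinarith)]

lemma continuous_h2 {K1 : ℝ} (hK1 : 0 < K1) : Continuous (h2 K1) := by
  rw [h2_eq_max hK1]
  fun_prop

lemma h2_pos {K1 : ℝ} (hK1 : 0 < K1) (x : ℝ) : 0 < h2 K1 x := by
  rw [h2_eq_max hK1]
  exact lt_max_of_lt_right hK1

end S17

namespace S17

lemma contDiff_h {K1 : ℝ} (hK1 : 0 < K1) {h : ℝ → ℝ}
    (hh : ∀ x : ℝ, h x =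
      if x < -(1 / Real.sqrt K1) then Real.exp (-Real.sqrt K1 * x - 1) - 1 / 2
      else if x ≤ 1 / Real.sqrt K1 then K1 / 2 * x ^ 2
      else Real.exp (Real.sqrt K1 * x - 1) - 1 / 2) :
    ContDiff ℝ 2 h := by
  have hd : deriv h = h1 K1 := funext fun x => (hasDerivAt_h hK1 hh x).deriv
  have hd1 : deriv (h1 K1) = h2 K1 := funext fun x => (hasDerivAt_h1 hK1 x).deriv
  rw [show (2 : WithTop ℕ∞) = 1 + 1 from rfl, contDiff_succ_iff_deriv]
  refine ⟨fun x => (hasDerivAt_h hK1 hh x).differentiableAt, ?_, ?_⟩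
  · intro hω
    simp at hω
  · rw [hd, contDiff_one_iff_deriv]
    exact ⟨fun x => (hasDerivAt_h1 hK1 x).differentiableAt,
      by rw [hd1]; exact continuous_h2 hK1⟩

lemma deriv_deriv_h {K1 : ℝ} (hK1 : 0 < K1) {h : ℝ → ℝ}
    (hh : ∀ x : ℝ, h x =
      if x < -(1 / Real.sqrt K1) then Real.exp (-Real.sqrt K1 * x - 1) - 1 / 2
      else if x ≤ 1 / Real.sqrt K1 then K1 / 2 * x ^ 2
      else Real.exp (Real.sqrt K1 * x - 1) - 1 / 2) :
    deriv (deriv h) = h2 K1 := by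
  have hd : deriv h = h1 K1 := funext fun x => (hasDerivAt_h hK1 hh x).deriv
  rw [hd]
  exact funext fun x => (hasDerivAt_h1 hK1 x).deriv

lemma h_nonneg {K1 : ℝ} (hK1 : 0 < K1) {h : ℝ → ℝ}
    (hh : ∀ x : ℝ, h x =
      if x < -(1 / Real.sqrt K1) then Real.exp (-Real.sqrt K1 * x - 1) - 1 / 2
      else if x ≤ 1 / Real.sqrt K1 then K1 / 2 * x ^ 2
      else Real.exp (Real.sqrt K1 * x - 1) - 1 / 2) (x : ℝ) :
    0 ≤ h x := by
  have hs : 0 < Real.sqrt K1 := Real.sqrt_pos.2 hK1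
  set s := Real.sqrt K1 with hsdef
  set a := 1 / s with hadef
  have ha : 0 < a := by positivity
  have hsa : s * a = 1 := by rw [hadef]; field_simp
  rw [hh x]
  split_ifs with hx hx2
  · have h1 : (1:ℝ) ≤ Real.exp (-s * x - 1) := Real.one_le_exp (by nlinarith)
    linarith
  · positivity
  · have hx2' : a < x := not_le.1 hx2
    have h1 : (1:ℝ) ≤ Real.exp (s * x - 1) := Real.one_le_exp (by nlinarith)
    linarith

lemma h_zero {K1 : ℝ} (hK1 : 0 < K1) {h : ℝ → ℝ}
    (hh : ∀ x : ℝ, h x =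
      if x < -(1 / Real.sqrt K1) then Real.exp (-Real.sqrt K1 * x - 1) - 1 / 2
      else if x ≤ 1 / Real.sqrt K1 then K1 / 2 * x ^ 2
      else Real.exp (Real.sqrt K1 * x - 1) - 1 / 2) :
    h 0 = 0 := by
  have hs : 0 < Real.sqrt K1 := Real.sqrt_pos.2 hK1
  have ha : 0 < 1 / Real.sqrt K1 := by positivity
  rw [hh 0, if_neg (by linarith), if_pos (by linarith)]
  ring

lemma h2_le {K1 : ℝ} (hK1 : 0 < K1) {h : ℝ → ℝ}
    (hh : ∀ x : ℝ, h x =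
      if x < -(1 / Real.sqrt K1) then Real.exp (-Real.sqrt K1 * x - 1) - 1 / 2
      else if x ≤ 1 / Real.sqrt K1 then K1 / 2 * x ^ 2
      else Real.exp (Real.sqrt K1 * x - 1) - 1 / 2) (x : ℝ) :
    h2 K1 x ≤ K1 + K1 * h x := by
  rw [hh x, h2]
  split_ifs with hx hx2
  · nlinarith [Real.exp_pos (-Real.sqrt K1 * x - 1)]
  · nlinarith [mul_nonneg hK1.le (by positivity : (0:ℝ) ≤ K1 / 2 * x ^ 2)]
  · nlinarith [Real.exp_pos (Real.sqrt K1 * x - 1)]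

end S17
open Real Set Filter
noncomputable section
namespace S17

local notation "E2" => EuclideanSpace ℝ (Fin 2)

noncomputable def e0 : E2 := EuclideanSpace.single 0 (1:ℝ)
noncomputable def e1 : E2 := EuclideanSpace.single 1 (1:ℝ)

lemma norm_eq2 (v : E2) : ‖v‖ = Real.sqrt ((v 0) ^ 2 + (v 1) ^ 2) := by
  rw [EuclideanSpace.norm_eq]
  simp [Fin.sum_univ_two, sq_abs]

lemma comb_apply0 (c d : ℝ) : (c • e0 + d • e1) 0 = c := by
  simp [e0, e1, EuclideanSpace.single_apply]
lemma comb_apply1 (c d : ℝ) : (c • e0 + d • e1) 1 = d := by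
  simp [e0, e1, EuclideanSpace.single_apply]

lemma norm_comb (c d : ℝ) : ‖c • e0 + d • e1‖ = Real.sqrt (c ^ 2 + d ^ 2) := by
  rw [norm_eq2, comb_apply0, comb_apply1]

lemma opNorm_diag {c d : ℝ} (hd : 0 ≤ d) (T : E2 →L[ℝ] E2)
    (hT : ∀ v : E2, T v = (c * v 0) • e0 + (d * v 1) • e1) : ‖T‖ = max |c| d := by
  set M := max |c| d with hM
  have hM0 : 0 ≤ M := le_trans hd (le_max_right _ _)
  have hcM : |c| ≤ M := le_max_left _ _
  have hdM : d ≤ M := le_max_right _ _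
  refine le_antisymm ?_ ?_
  · refine T.opNorm_le_bound hM0 fun v => ?_
    rw [hT v, norm_comb, norm_eq2]
    have key : (c * v 0) ^ 2 + (d * v 1) ^ 2 ≤ M ^ 2 * ((v 0) ^ 2 + (v 1) ^ 2) := by
      nlinarith [sq_nonneg (v 0), sq_nonneg (v 1), sq_abs c, abs_nonneg c,
        mul_self_le_mul_self (abs_nonneg c) hcM, mul_self_le_mul_self hd hdM]
    calc Real.sqrt ((c * v 0) ^ 2 + (d * v 1) ^ 2)
        ≤ Real.sqrt (M ^ 2 * ((v 0) ^ 2 + (v 1) ^ 2)) := Real.sqrt_le_sqrt key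
      _ = M * Real.sqrt ((v 0) ^ 2 + (v 1) ^ 2) := by
          rw [Real.sqrt_mul (sq_nonneg M), Real.sqrt_sq hM0]
  · have he0 : (e0 : E2) 0 = 1 := by simp [e0, EuclideanSpace.single_apply]
    have he0' : (e0 : E2) 1 = 0 := by simp [e0, EuclideanSpace.single_apply]
    have he1 : (e1 : E2) 0 = 0 := by simp [e1, EuclideanSpace.single_apply]
    have he1' : (e1 : E2) 1 = 1 := by simp [e1, EuclideanSpace.single_apply]
    have hne0 : ‖(e0 : E2)‖ = 1 := by simp [e0]
    have hne1 : ‖(e1 : E2)‖ = 1 := by simp [e1]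
    refine max_le ?_ ?_
    · have h1 : ‖T e0‖ = |c| := by
        rw [hT e0, he0, he0', norm_comb]
        simp [Real.sqrt_sq_eq_abs]
      have := T.le_opNorm e0
      rw [h1, hne0, mul_one] at this
      exact this
    · have h1 : ‖T e1‖ = d := by
        rw [hT e1, he1, he1', norm_comb]
        simp [Real.sqrt_sq_eq_abs, abs_of_nonneg hd]
      have := T.le_opNorm e1
      rw [h1, hne1, mul_one] at this
      exact this

end S17

open Real

/-- River-valley landscape. With `h` the piecewise
exponential/quadratic function and `f(x, y) = h(x) + (K₁/2)y²`, the function `f` is twice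
continuously differentiable, nonnegative with infimum `0`, and
`‖∇²f(x,y)‖ = max{|h''(x)|, K₁} ≤ K₁ + K₁ f(x,y)`; i.e. `f` is `(1, K₁, K₁)`-smooth. -/
theorem statement17 (K1 : ℝ) (hK1 : 0 < K1)
    (h : ℝ → ℝ)
    (hh : ∀ x : ℝ, h x =
      if x < -(1 / Real.sqrt K1) then Real.exp (-Real.sqrt K1 * x - 1) - 1 / 2
      else if x ≤ 1 / Real.sqrt K1 then K1 / 2 * x ^ 2
      else Real.exp (Real.sqrt K1 * x - 1) - 1 / 2)
    (f : EuclideanSpace ℝ (Fin 2) → ℝ)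
    (hfdef : ∀ w : EuclideanSpace ℝ (Fin 2), f w = h (w 0) + K1 / 2 * (w 1) ^ 2) :
    ContDiff ℝ 2 f ∧
    (∀ w, 0 ≤ f w) ∧
    IsGLB (Set.range f) 0 ∧
    (∀ w : EuclideanSpace ℝ (Fin 2),
      ‖fderiv ℝ (gradient f) w‖ = max |deriv (deriv h) (w 0)| K1 ∧
      ‖fderiv ℝ (gradient f) w‖ ≤ K1 + K1 * f w) := by
  have hf : f = fun w => h (w 0) + K1 / 2 * (w 1) ^ 2 := funext hfdef
  have hfproj : (fun w : EuclideanSpace ℝ (Fin 2) => h (w 0))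
      = h ∘ (EuclideanSpace.proj 0 : EuclideanSpace ℝ (Fin 2) →L[ℝ] ℝ) := rfl
  -- nonnegativity
  have hnonneg : ∀ w, 0 ≤ f w := by
    intro w
    rw [hfdef w]
    have := S17.h_nonneg hK1 hh (w 0)
    positivity
  -- gradient
  have hgrad : ∀ w : EuclideanSpace ℝ (Fin 2),
      HasGradientAt f (S17.h1 K1 (w 0) • S17.e0 + (K1 * w 1) • S17.e1) w := by
    intro w
    have hA : HasFDerivAt (fun w : EuclideanSpace ℝ (Fin 2) => h (w 0))
        (S17.h1 K1 (w 0) • (EuclideanSpace.proj 0 : EuclideanSpace ℝ (Fin 2) →L[ℝ] ℝ)) w :=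
      (S17.hasDerivAt_h hK1 hh (w 0)).comp_hasFDerivAt w
        (EuclideanSpace.proj 0 : EuclideanSpace ℝ (Fin 2) →L[ℝ] ℝ).hasFDerivAt
    have hB : HasFDerivAt (fun w : EuclideanSpace ℝ (Fin 2) => K1 / 2 * (w 1) ^ 2)
        ((K1 * w 1) • (EuclideanSpace.proj 1 : EuclideanSpace ℝ (Fin 2) →L[ℝ] ℝ)) w :=
      by have := (S17.quad_deriv K1 (w 1)).comp_hasFDerivAt w
           (EuclideanSpace.proj 1 : EuclideanSpace ℝ (Fin 2) →L[ℝ] ℝ).hasFDerivAt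
         exact this
    have hAB := hA.add hB
    rw [hasGradientAt_iff_hasFDerivAt, hf]
    refine hAB.congr_fderiv ?_
    apply ContinuousLinearMap.ext
    intro v
    simp [S17.e0, S17.e1, inner_add_left, real_inner_smul_left,
      EuclideanSpace.inner_single_left]
  have hgradfun : gradient f
      = fun w => S17.h1 K1 (w 0) • S17.e0 + (K1 * w 1) • S17.e1 :=
    funext fun w => (hgrad w).gradient
  -- Hessian
  have hfder : ∀ w : EuclideanSpace ℝ (Fin 2),
      fderiv ℝ (gradient f) w
        = ((S17.h2 K1 (w 0)) • (EuclideanSpace.proj 0 :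
            EuclideanSpace ℝ (Fin 2) →L[ℝ] ℝ)).smulRight S17.e0
          + ((K1 : ℝ) • (EuclideanSpace.proj 1 :
            EuclideanSpace ℝ (Fin 2) →L[ℝ] ℝ)).smulRight S17.e1 := by
    intro w
    rw [hgradfun]
    have hA : HasFDerivAt (fun w : EuclideanSpace ℝ (Fin 2) => S17.h1 K1 (w 0))
        ((S17.h2 K1 (w 0)) • (EuclideanSpace.proj 0 : EuclideanSpace ℝ (Fin 2) →L[ℝ] ℝ)) w :=
      by have := (S17.hasDerivAt_h1 hK1 (w 0)).comp_hasFDerivAt w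
           (EuclideanSpace.proj 0 : EuclideanSpace ℝ (Fin 2) →L[ℝ] ℝ).hasFDerivAt
         exact this
    have hB : HasFDerivAt (fun w : EuclideanSpace ℝ (Fin 2) => K1 * w 1)
        ((K1 : ℝ) • (EuclideanSpace.proj 1 : EuclideanSpace ℝ (Fin 2) →L[ℝ] ℝ)) w :=
      (S17.lin_deriv K1 (w 1)).comp_hasFDerivAt w
        (EuclideanSpace.proj 1 : EuclideanSpace ℝ (Fin 2) →L[ℝ] ℝ).hasFDerivAt
    exact ((hA.smul_const S17.e0).add (hB.smul_const S17.e1)).fderiv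
  have hnorm : ∀ w : EuclideanSpace ℝ (Fin 2),
      ‖fderiv ℝ (gradient f) w‖ = max |S17.h2 K1 (w 0)| K1 := by
    intro w
    rw [hfder w]
    refine S17.opNorm_diag hK1.le _ fun v => ?_
    simp [smul_eq_mul]
  refine ⟨?_, hnonneg, ?_, ?_⟩
  · -- ContDiff
    rw [hf]
    have h1 : ContDiff ℝ 2 (fun w : EuclideanSpace ℝ (Fin 2) => h (w 0)) := by
      rw [hfproj]
      exact (S17.contDiff_h hK1 hh).comp
        (EuclideanSpace.proj 0 : EuclideanSpace ℝ (Fin 2) →L[ℝ] ℝ).contDiff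
    have h2 : ContDiff ℝ 2 (fun w : EuclideanSpace ℝ (Fin 2) => K1 / 2 * (w 1) ^ 2) :=
      contDiff_const.mul
        (((EuclideanSpace.proj 1 : EuclideanSpace ℝ (Fin 2) →L[ℝ] ℝ).contDiff).pow 2)
    exact h1.add h2
  · -- IsGLB
    constructor
    · rintro r ⟨w, rfl⟩
      exact hnonneg w
    · intro b hb
      refine hb ⟨0, ?_⟩
      rw [hfdef 0]
      have h00 : ((0 : EuclideanSpace ℝ (Fin 2)) 0 : ℝ) = 0 := rfl
      have h01 : ((0 : EuclideanSpace ℝ (Fin 2)) 1 : ℝ) = 0 := rfl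
      rw [h00, h01, S17.h_zero hK1 hh]
      ring
  · intro w
    have hdd : deriv (deriv h) (w 0) = S17.h2 K1 (w 0) := by
      rw [S17.deriv_deriv_h hK1 hh]
    refine ⟨by rw [hnorm w, hdd], ?_⟩
    rw [hnorm w]
    have habs : |S17.h2 K1 (w 0)| = S17.h2 K1 (w 0) :=
      abs_of_pos (S17.h2_pos hK1 (w 0))
    have hle1 : S17.h2 K1 (w 0) ≤ K1 + K1 * h (w 0) := S17.h2_le hK1 hh (w 0)
    have hy : 0 ≤ K1 / 2 * (w 1) ^ 2 := by positivity
    have hfw : h (w 0) ≤ f w := by rw [hfdef w]; linarith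
    have : K1 + K1 * h (w 0) ≤ K1 + K1 * f w := by nlinarith
    refine max_le ?_ ?_
    · rw [habs]; linarith
    · nlinarith [hnonneg w]
end
end
end
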